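/- arXiv:0901.2915 — 2 statements merged into one kernel-verified Lean document; each statement's English description precedes it below -/
import Mathlib

section
/- (Duality theorem) Let V ⊂ (ℝ_max^n)² be a congruence, A ∈ ℝ_max^{n×n}, C ∈ ℝ_max^{q×n}. For every closed congruence W ⊂ (ℝ_max^n)²: W is a (C,A)-conditioned invariant congruence containing V if and only if W^⊤ is an (Aᵗ,Cᵗ)-controlled invariant semimodule contained in V^⊤. -/
/-!
Max-plus (tropical) framework.

The max-plus semiring `ℝ_max = ℝ ∪ {-∞}` is modelled as `WithBot ℝ`:
max-plus addition `a ⊕ b = max a b` is the lattice `⊔`, and max-plus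
multiplication `a ⊙ b = a + b` is `+` (with `⊥ = -∞` absorbing).
The topology induced by the metric `d(a,b) = |exp a - exp b|` is the
order topology.
-/

/-- The max-plus semiring `ℝ ∪ {-∞}`. -/
abbrev Rmax : Type := WithBot ℝ

/-- The topology of `ℝ_max` (the order topology, which coincides with the
topology induced by the metric `d(a,b) = |exp a - exp b|`). -/
instance : TopologicalSpace Rmax := Preorder.topology Rmax

instance : OrderTopology Rmax := ⟨rfl⟩

/-- Vectors with entries in a (max-plus-like) semiring `R`. -/
abbrev Vec (R : Type*) (n : ℕ) := Fin n → R

section Defs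

variable {R : Type*} [LinearOrder R] [Add R] [OrderBot R]

/-- Max-plus scalar action on a vector: `(λ x)_i = λ ⊙ x_i = λ + x_i`. -/
def sm {n : ℕ} (lam : R) (x : Vec R n) : Vec R n := fun i => lam + x i

/-- Max-plus matrix-vector product: `(A x)_i = ⊕_k A_{ik} ⊙ x_k = max_k (A_{ik} + x_k)`. -/
def mulVecMP {m n : ℕ} (A : Matrix (Fin m) (Fin n) R) (x : Vec R n) : Vec R m :=
  fun i => Finset.univ.sup fun k => A i k + x k

/-- A subsemimodule (max-plus cone) of `R^n`: a subset stable under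
max-plus linear combinations `λ x ⊕ μ y`. -/
def IsSemimodule {n : ℕ} (K : Set (Vec R n)) : Prop :=
  ∀ x ∈ K, ∀ y ∈ K, ∀ lam mu : R, (sm lam x ⊔ sm mu y) ∈ K

/-- Max-plus scalar action on a pair of vectors. -/
def smP {n : ℕ} (lam : R) (p : Vec R n × Vec R n) : Vec R n × Vec R n :=
  (sm lam p.1, sm lam p.2)

/-- A subsemimodule of `(R^n)²`. -/
def IsPairSemimodule {n : ℕ} (W : Set (Vec R n × Vec R n)) : Prop :=
  ∀ p ∈ W, ∀ q ∈ W, ∀ lam mu : R, (smP lam p ⊔ smP mu q) ∈ W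

/-- A congruence on `R^n`: an equivalence relation which is a
subsemimodule of `(R^n)²`. -/
def IsCongruence {n : ℕ} (W : Set (Vec R n × Vec R n)) : Prop :=
  Equivalence (fun x y => (x, y) ∈ W) ∧ IsPairSemimodule W

/-- The (max-plus) kernel of a matrix: `ker E = {(x,y) : E x = E y}`. -/
def kerM {p n : ℕ} (E : Matrix (Fin p) (Fin n) R) : Set (Vec R n × Vec R n) :=
  {w | mulVecMP E w.1 = mulVecMP E w.2}

/-- The image of a matrix: `Im E = {E x}`. -/
def imM {n q : ℕ} (E : Matrix (Fin n) (Fin q) R) : Set (Vec R n) :=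
  {y | ∃ x : Vec R q, y = mulVecMP E x}

/-- `A W = {(A x, A y) : (x,y) ∈ W}` for a set of pairs `W`. -/
def mapCong {n : ℕ} (A : Matrix (Fin n) (Fin n) R) (W : Set (Vec R n × Vec R n)) :
    Set (Vec R n × Vec R n) :=
  {p | ∃ w ∈ W, p = (mulVecMP A w.1, mulVecMP A w.2)}

/-- `A S = {A x : x ∈ S}`. -/
def mapSet {n : ℕ} (A : Matrix (Fin n) (Fin n) R) (S : Set (Vec R n)) : Set (Vec R n) :=
  {y | ∃ x ∈ S, y = mulVecMP A x}

/-- `A⁻¹ S = {x : A x ∈ S}`. -/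
def invSet {n : ℕ} (A : Matrix (Fin n) (Fin n) R) (S : Set (Vec R n)) : Set (Vec R n) :=
  {x | mulVecMP A x ∈ S}

/-- `A⁻¹ U = {(x,y) : (A x, A y) ∈ U}` for a set of pairs `U`. -/
def invPair {n : ℕ} (A : Matrix (Fin n) (Fin n) R) (U : Set (Vec R n × Vec R n)) :
    Set (Vec R n × Vec R n) :=
  {p | (mulVecMP A p.1, mulVecMP A p.2) ∈ U}

/-- The max-plus sum of two subsets of `R^n`: `X ⊕ Y = {x ⊕ y : x ∈ X, y ∈ Y}`. -/
def setSum {n : ℕ} (X Y : Set (Vec R n)) : Set (Vec R n) :=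
  {z | ∃ x ∈ X, ∃ y ∈ Y, z = x ⊔ y}

/-- The max-plus sum of two subsets of `(R^n)²`. -/
def pairSum {n : ℕ} (X Y : Set (Vec R n × Vec R n)) : Set (Vec R n × Vec R n) :=
  {z | ∃ x ∈ X, ∃ y ∈ Y, z = x ⊔ y}

/-- `W` is `(C,A)`-conditioned invariant: `A (W ∩ ker C) ⊆ W`. -/
def CondInv {n q : ℕ} (C : Matrix (Fin q) (Fin n) R) (A : Matrix (Fin n) (Fin n) R)
    (W : Set (Vec R n × Vec R n)) : Prop :=
  mapCong A (W ∩ kerM C) ⊆ W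

/-- `X` is `(A,B)`-controlled invariant: `A X ⊆ X ⊕ Im B`. -/
def ContrInv {n q : ℕ} (A : Matrix (Fin n) (Fin n) R) (B : Matrix (Fin n) (Fin q) R)
    (X : Set (Vec R n)) : Prop :=
  mapSet A X ⊆ setSum X (imM B)

/-- The max-plus scalar product `uᵗ v = ⊕_i u_i ⊙ v_i = max_i (u_i + v_i)`. -/
def dotMP {n : ℕ} (u v : Vec R n) : R := Finset.univ.sup fun i => u i + v i

/-- The orthogonal of a semimodule `X ⊆ R^n`:
`X^⊥ = {(x,y) : xᵗ z = yᵗ z, ∀ z ∈ X}`. -/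
def orthS {n : ℕ} (X : Set (Vec R n)) : Set (Vec R n × Vec R n) :=
  {p | ∀ z ∈ X, dotMP p.1 z = dotMP p.2 z}

/-- The orthogonal of a congruence (or set of pairs) `W ⊆ (R^n)²`:
`W^⊤ = {z : xᵗ z = yᵗ z, ∀ (x,y) ∈ W}`. -/
def orthC {n : ℕ} (W : Set (Vec R n × Vec R n)) : Set (Vec R n) :=
  {z | ∀ p ∈ W, dotMP p.1 z = dotMP p.2 z}

/-- The smallest congruence containing a set `S ⊆ (R^n)²`. -/
def spanCong {n : ℕ} (S : Set (Vec R n × Vec R n)) : Set (Vec R n × Vec R n) :=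
  ⋂₀ {W | IsCongruence W ∧ S ⊆ W}

/-- The smallest semimodule containing a set `S ⊆ R^n`. -/
def spanSet {n : ℕ} (S : Set (Vec R n)) : Set (Vec R n) :=
  ⋂₀ {K | IsSemimodule K ∧ S ⊆ K}

end Defs

-- ====================== auxiliary development ======================
noncomputable instance : ConditionallyCompleteLinearOrder Rmax := by
  refine { WithBot.conditionallyCompleteLattice, (inferInstance : LinearOrder Rmax) with
    csSup_of_not_bddAbove := ?_, csInf_of_not_bddBelow := ?_ }
  · intro s hs
    rw [WithBot.sSup_empty]
    exact if_pos (Or.inr hs)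
  · intro s hs
    exact absurd ⟨⊥, fun x _ => bot_le⟩ hs

namespace MPDual

def botVec (n : ℕ) : Vec Rmax n := fun _ => ⊥
noncomputable def ebasis {n : ℕ} (k : Fin n) : Vec Rmax n := fun j => if j = k then (0:Rmax) else ⊥

lemma rmax_add_sup (a b c : Rmax) : a + (b ⊔ c) = (a + b) ⊔ (a + c) :=
  (Monotone.map_max (fun _ _ h => add_le_add_right h a))

lemma rmax_sup_add (a b c : Rmax) : (b ⊔ c) + a = (b + a) ⊔ (c + a) := by
  rw [add_comm, rmax_add_sup, add_comm a b, add_comm a c]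

lemma add_finsup {ι : Type*} (s : Finset ι) (f : ι → Rmax) (a : Rmax) :
    a + s.sup f = s.sup fun i => a + f i := by
  induction s using Finset.cons_induction with
  | empty => simpa using WithBot.add_bot a
  | cons i s hi ih => rw [Finset.sup_cons, Finset.sup_cons, rmax_add_sup, ih]

lemma finsup_add {ι : Type*} (s : Finset ι) (f : ι → Rmax) (a : Rmax) :
    s.sup f + a = s.sup fun i => f i + a := by
  rw [add_comm, add_finsup]
  exact Finset.sup_congr rfl fun i _ => add_comm a (f i)

lemma wb_exists_between {a b : Rmax} (h : a < b) : ∃ γ : ℝ, a < (γ:Rmax) ∧ (γ:Rmax) < b := by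
  have hb : b ≠ ⊥ := by rintro rfl; exact not_lt_bot h
  obtain ⟨r, rfl⟩ := WithBot.ne_bot_iff_exists.mp hb
  induction a using WithBot.recBotCoe with
  | bot => exact ⟨r - 1, WithBot.bot_lt_coe _, by exact_mod_cast sub_one_lt r⟩
  | coe s =>
      have hs : s < r := by exact_mod_cast h
      refine ⟨(s + r) / 2, ?_, ?_⟩ <;> exact_mod_cast (by linarith)

lemma wb_eq_bot_of_forall {a : Rmax} (h : ∀ m : ℕ, a ≤ ((-(m:ℝ) : ℝ) : Rmax)) : a = ⊥ := by
  induction a using WithBot.recBotCoe with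
  | bot => rfl
  | coe r =>
      obtain ⟨m, hm⟩ := exists_nat_gt (-r)
      have := h m
      rw [WithBot.coe_le_coe] at this
      linarith

lemma wb_cancel (r : ℝ) (a : Rmax) : ((-r : ℝ) : Rmax) + (((r : ℝ) : Rmax) + a) = a := by
  rw [← add_assoc, ← WithBot.coe_add, neg_add_cancel]
  exact zero_add a

lemma wb_add_le_iff (r : ℝ) (a b : Rmax) :
    (r : Rmax) + a ≤ b ↔ a ≤ ((-r : ℝ) : Rmax) + b := by
  constructor
  · intro h
    have := add_le_add_right h (((-r : ℝ)) : Rmax)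
    rwa [wb_cancel] at this
  · intro h
    have := add_le_add_right h ((r : ℝ) : Rmax)
    rwa [← add_assoc, ← WithBot.coe_add, add_neg_cancel, WithBot.coe_zero, zero_add] at this

end MPDual

namespace MPDual2
open MPDual

variable {n m q : ℕ}

lemma le_dotMP (u v : Vec Rmax n) (i : Fin n) : u i + v i ≤ dotMP u v :=
  Finset.le_sup (f := fun j => u j + v j) (Finset.mem_univ i)

lemma dotMP_le_iff {u v : Vec Rmax n} {c : Rmax} : dotMP u v ≤ c ↔ ∀ i, u i + v i ≤ c := by
  simp [dotMP, Finset.sup_le_iff]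

lemma dotMP_comm (u v : Vec Rmax n) : dotMP u v = dotMP v u :=
  Finset.sup_congr rfl fun i _ => add_comm _ _

lemma dotMP_mono_left {u u' : Vec Rmax n} (h : u ≤ u') (v : Vec Rmax n) :
    dotMP u v ≤ dotMP u' v :=
  Finset.sup_mono_fun fun i _ => add_le_add_left (h i) _

lemma dotMP_mono_right (u : Vec Rmax n) {v v' : Vec Rmax n} (h : v ≤ v') :
    dotMP u v ≤ dotMP u v' :=
  Finset.sup_mono_fun fun i _ => add_le_add_right (h i) _

lemma dotMP_sup_left (x y z : Vec Rmax n) : dotMP (x ⊔ y) z = dotMP x z ⊔ dotMP y z := by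
  have : dotMP (x ⊔ y) z
      = Finset.univ.sup ((fun i => x i + z i) ⊔ (fun i => y i + z i)) :=
    Finset.sup_congr rfl fun i _ => rmax_sup_add (z i) (x i) (y i)
  rw [this, Finset.sup_sup]; rfl

lemma dotMP_sup_right (x y z : Vec Rmax n) : dotMP z (x ⊔ y) = dotMP z x ⊔ dotMP z y := by
  rw [dotMP_comm, dotMP_sup_left, dotMP_comm x z, dotMP_comm y z]

lemma dotMP_sm_left (lam : Rmax) (x z : Vec Rmax n) :
    dotMP (sm lam x) z = lam + dotMP x z := by
  unfold dotMP sm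
  rw [add_finsup]
  exact Finset.sup_congr rfl fun i _ => add_assoc lam (x i) (z i)

lemma dotMP_sm_right (lam : Rmax) (x z : Vec Rmax n) :
    dotMP z (sm lam x) = lam + dotMP z x := by
  rw [dotMP_comm, dotMP_sm_left, dotMP_comm x z]

lemma dotMP_bot_left (z : Vec Rmax n) : dotMP (botVec n) z = ⊥ :=
  le_bot_iff.mp (Finset.sup_le fun i _ => by simp [botVec])

lemma dotMP_bot_right (z : Vec Rmax n) : dotMP z (botVec n) = ⊥ := by
  rw [dotMP_comm]; exact dotMP_bot_left z

lemma dotMP_ebasis_left (k : Fin n) (z : Vec Rmax n) : dotMP (ebasis k) z = z k := by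
  apply le_antisymm
  · refine Finset.sup_le fun j _ => ?_
    by_cases h : j = k
    · subst h; simp [ebasis]
    · simp [ebasis, h]
  · have := le_dotMP (ebasis k) z k
    simpa [ebasis] using this

lemma dotMP_ebasis_right (k : Fin n) (z : Vec Rmax n) : dotMP z (ebasis k) = z k := by
  rw [dotMP_comm]; exact dotMP_ebasis_left k z

lemma mulVecMP_mono {A : Matrix (Fin m) (Fin n) Rmax} {x y : Vec Rmax n} (h : x ≤ y) :
    mulVecMP A x ≤ mulVecMP A y :=
  fun i => Finset.sup_mono_fun fun k _ => add_le_add_right (h k) _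

lemma mulVecMP_bot (A : Matrix (Fin m) (Fin n) Rmax) : mulVecMP A (botVec n) = botVec m :=
  funext fun i => le_bot_iff.mp (Finset.sup_le fun k _ => by simp [botVec])

lemma mulVecMP_sup (A : Matrix (Fin m) (Fin n) Rmax) (x y : Vec Rmax n) :
    mulVecMP A (x ⊔ y) = mulVecMP A x ⊔ mulVecMP A y := by
  funext i
  have : mulVecMP A (x ⊔ y) i
      = Finset.univ.sup ((fun k => A i k + x k) ⊔ (fun k => A i k + y k)) :=
    Finset.sup_congr rfl fun k _ => rmax_add_sup (A i k) (x k) (y k)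
  rw [this, Finset.sup_sup]; rfl

lemma mulVecMP_sm (A : Matrix (Fin m) (Fin n) Rmax) (lam : Rmax) (x : Vec Rmax n) :
    mulVecMP A (sm lam x) = sm lam (mulVecMP A x) := by
  funext i
  show Finset.univ.sup (fun k => A i k + (lam + x k)) = lam + Finset.univ.sup fun k => A i k + x k
  rw [add_finsup]
  exact Finset.sup_congr rfl fun k _ => by
    rw [← add_assoc, add_comm (A i k) lam, add_assoc]

lemma adjointMP (A : Matrix (Fin m) (Fin n) Rmax) (x : Vec Rmax n) (z : Vec Rmax m) :
    dotMP (mulVecMP A x) z = dotMP x (mulVecMP A.transpose z) := by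
  unfold dotMP mulVecMP
  have l1 : (Finset.univ.sup fun i => (Finset.univ.sup fun k => A i k + x k) + z i)
      = Finset.univ.sup fun i => Finset.univ.sup fun k => A i k + x k + z i :=
    Finset.sup_congr rfl fun i _ => finsup_add _ _ _
  have l2 : (Finset.univ.sup fun k => x k + Finset.univ.sup fun i => A.transpose k i + z i)
      = Finset.univ.sup fun k => Finset.univ.sup fun i => x k + (A.transpose k i + z i) :=
    Finset.sup_congr rfl fun k _ => add_finsup _ _ _
  rw [l1, l2, Finset.sup_comm]
  refine Finset.sup_congr rfl fun k _ => Finset.sup_congr rfl fun i _ => ?_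
  show A i k + x k + z i = x k + (A i k + z i)
  rw [← add_assoc, add_comm (A i k) (x k)]

end MPDual2

namespace MPDual3
open MPDual MPDual2

variable {n m q : ℕ}

lemma sm_zero (x : Vec Rmax n) : sm (0 : Rmax) x = x := funext fun i => zero_add (x i)

lemma smP_zero (p : Vec Rmax n × Vec Rmax n) : smP (0 : Rmax) p = p := by
  unfold smP; rw [sm_zero, sm_zero]

lemma sm_bot (x : Vec Rmax n) : sm (⊥ : Rmax) x = botVec n :=
  funext fun i => WithBot.bot_add (x i)

lemma smP_bot (p : Vec Rmax n × Vec Rmax n) : smP (⊥ : Rmax) p = (botVec n, botVec n) := by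
  unfold smP; rw [sm_bot, sm_bot]

section Cong
variable {W : Set (Vec Rmax n × Vec Rmax n)} (hW : IsCongruence W)
include hW

lemma cong_refl (t : Vec Rmax n) : (t, t) ∈ W := hW.1.refl t

lemma cong_symm {p : Vec Rmax n × Vec Rmax n} (hp : p ∈ W) : (p.2, p.1) ∈ W := hW.1.symm hp

lemma cong_trans {a b c : Vec Rmax n} (h1 : (a, b) ∈ W) (h2 : (b, c) ∈ W) : (a, c) ∈ W :=
  hW.1.trans h1 h2

lemma cong_sup_mem {p r : Vec Rmax n × Vec Rmax n} (hp : p ∈ W) (hr : r ∈ W) : p ⊔ r ∈ W := by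
  have h := hW.2 p hp r hr 0 0
  rwa [smP_zero, smP_zero] at h

lemma cong_smP_mem {p : Vec Rmax n × Vec Rmax n} (hp : p ∈ W) (lam : Rmax) : smP lam p ∈ W := by
  have h := hW.2 p hp p hp lam lam
  rwa [sup_idem] at h

lemma cong_bot_mem : ((botVec n, botVec n) : Vec Rmax n × Vec Rmax n) ∈ W := by
  have h := cong_smP_mem hW (cong_refl hW (botVec n)) ⊥
  rwa [smP_bot] at h

lemma cong_finsup_mem {ι : Type*} (s : Finset ι) (g : ι → Vec Rmax n × Vec Rmax n)
    (hg : ∀ i ∈ s, g i ∈ W) : s.sup g ∈ W := by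
  induction s using Finset.cons_induction with
  | empty => exact cong_bot_mem hW
  | cons i s hi ih =>
      rw [Finset.sup_cons]
      exact cong_sup_mem hW (hg i (Finset.mem_cons_self i s)) (ih fun j hj => hg j (Finset.mem_cons_of_mem hj))

end Cong

section Semim
variable {X : Set (Vec Rmax n)} (hX : IsSemimodule X)
include hX

lemma semim_sup_mem {x y : Vec Rmax n} (hx : x ∈ X) (hy : y ∈ X) : x ⊔ y ∈ X := by
  have h := hX x hx y hy 0 0
  rwa [sm_zero, sm_zero] at h

lemma semim_sm_mem {x : Vec Rmax n} (hx : x ∈ X) (lam : Rmax) : sm lam x ∈ X := by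
  have h := hX x hx x hx lam lam
  rwa [sup_idem] at h

lemma semim_bot_mem {x : Vec Rmax n} (hx : x ∈ X) : botVec n ∈ X := by
  have h := semim_sm_mem hX hx ⊥
  rwa [sm_bot] at h

lemma semim_finsup_mem (h0 : botVec n ∈ X) {ι : Type*} (s : Finset ι) (g : ι → Vec Rmax n)
    (hg : ∀ i ∈ s, g i ∈ X) : s.sup g ∈ X := by
  induction s using Finset.cons_induction with
  | empty => exact h0
  | cons i s hi ih =>
      rw [Finset.sup_cons]
      exact semim_sup_mem hX (hg i (Finset.mem_cons_self i s)) (ih fun j hj => hg j (Finset.mem_cons_of_mem hj))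

end Semim

lemma orthC_antitone {W W' : Set (Vec Rmax n × Vec Rmax n)} (h : W ⊆ W') :
    orthC W' ⊆ orthC W := fun z hz p hp => hz p (h hp)

lemma orthS_antitone {X X' : Set (Vec Rmax n)} (h : X ⊆ X') : orthS X' ⊆ orthS X :=
  fun p hp z hz => hp z (h hz)

lemma botVec_mem_orthC (W : Set (Vec Rmax n × Vec Rmax n)) : botVec n ∈ orthC W :=
  fun p _ => by rw [dotMP_bot_right, dotMP_bot_right]

lemma orthC_semimodule (W : Set (Vec Rmax n × Vec Rmax n)) : IsSemimodule (orthC W) := by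
  intro z hz w hw lam mu p hp
  rw [dotMP_sup_right, dotMP_sup_right, dotMP_sm_right, dotMP_sm_right, dotMP_sm_right,
    dotMP_sm_right, hz p hp, hw p hp]

lemma orthC_sup_mem {W : Set (Vec Rmax n × Vec Rmax n)} {z w : Vec Rmax n}
    (hz : z ∈ orthC W) (hw : w ∈ orthC W) : z ⊔ w ∈ orthC W :=
  semim_sup_mem (orthC_semimodule W) hz hw

lemma kerM_eq_orthS (C : Matrix (Fin q) (Fin n) Rmax) :
    kerM C = orthS (imM C.transpose) := by
  ext p
  constructor
  · intro hp z hz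
    obtain ⟨u, rfl⟩ := hz
    rw [← adjointMP, ← adjointMP]
    show dotMP (mulVecMP C p.1) u = dotMP (mulVecMP C p.2) u
    rw [hp]
  · intro hp
    funext i
    have h1 : mulVecMP C p.1 i = dotMP p.1 (mulVecMP C.transpose (ebasis i)) := by
      rw [← adjointMP, dotMP_ebasis_right]
    have h2 : mulVecMP C p.2 i = dotMP p.2 (mulVecMP C.transpose (ebasis i)) := by
      rw [← adjointMP, dotMP_ebasis_right]
    rw [h1, h2]
    exact hp _ ⟨ebasis i, rfl⟩

end MPDual3

namespace MPTop
open MPDual MPDual2 MPDual3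

variable {n m q : ℕ}

noncomputable def addIso (r : ℝ) : Rmax ≃o Rmax where
  toFun x := (r : Rmax) + x
  invFun x := ((-r : ℝ) : Rmax) + x
  left_inv x := wb_cancel r x
  right_inv x := by
    show (r : Rmax) + (((-r : ℝ) : Rmax) + x) = x
    rw [← add_assoc, ← WithBot.coe_add, add_neg_cancel, WithBot.coe_zero, zero_add]
  map_rel_iff' := by
    intro a b
    show (r : Rmax) + a ≤ (r : Rmax) + b ↔ a ≤ b
    constructor
    · intro h
      have h2 := add_le_add_right h (((-r : ℝ)) : Rmax)
      rwa [wb_cancel, wb_cancel] at h2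
    · intro h
      exact add_le_add_right h _

lemma cont_const_add (a : Rmax) : Continuous (fun x : Rmax => a + x) := by
  induction a using WithBot.recBotCoe with
  | bot =>
      have : (fun x : Rmax => ⊥ + x) = fun _ => (⊥ : Rmax) :=
        funext fun x => WithBot.bot_add x
      rw [this]; exact continuous_const
  | coe r => exact (addIso r).toHomeomorph.continuous

lemma cont_add_const (a : Rmax) : Continuous (fun x : Rmax => x + a) := by
  have : (fun x : Rmax => x + a) = fun x : Rmax => a + x := funext fun x => add_comm x a
  rw [this]; exact cont_const_add a

lemma cont_finsup {ι : Type*} {β : Type*} [TopologicalSpace β] (s : Finset ι)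
    (f : ι → β → Rmax) (hf : ∀ i ∈ s, Continuous (f i)) :
    Continuous fun b => s.sup fun i => f i b := by
  induction s using Finset.cons_induction with
  | empty => simpa using continuous_const
  | cons i s hi ih =>
      simp only [Finset.sup_cons]
      exact (hf i (Finset.mem_cons_self i s)).max
        (ih fun j hj => hf j (Finset.mem_cons_of_mem hj))

lemma cont_dot_left (x : Vec Rmax n) : Continuous fun z : Vec Rmax n => dotMP x z := by
  unfold dotMP
  exact cont_finsup Finset.univ (fun i (z : Vec Rmax n) => x i + z i)
    (fun i _ => (cont_const_add (x i)).comp (continuous_apply i))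

lemma cont_dot_right (z : Vec Rmax n) : Continuous fun x : Vec Rmax n => dotMP x z := by
  unfold dotMP
  exact cont_finsup Finset.univ (fun i (x : Vec Rmax n) => x i + z i)
    (fun i _ => (cont_add_const (z i)).comp (continuous_apply i))

lemma cont_mulVecMP (A : Matrix (Fin m) (Fin n) Rmax) :
    Continuous fun x : Vec Rmax n => mulVecMP A x := by
  refine continuous_pi fun i => ?_
  show Continuous fun x : Vec Rmax n => Finset.univ.sup fun k => A i k + x k
  exact cont_finsup Finset.univ (fun k (x : Vec Rmax n) => A i k + x k)
    (fun k _ => (cont_const_add (A i k)).comp (continuous_apply k))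

lemma closed_orthC (W : Set (Vec Rmax n × Vec Rmax n)) : IsClosed (orthC W) := by
  have : orthC W = ⋂ p ∈ W, {z : Vec Rmax n | dotMP p.1 z = dotMP p.2 z} := by
    ext z; simp [orthC]
  rw [this]
  exact isClosed_biInter fun p _ => isClosed_eq (cont_dot_left p.1) (cont_dot_left p.2)

lemma closed_kerM (C : Matrix (Fin q) (Fin n) Rmax) : IsClosed (kerM C) :=
  isClosed_eq ((cont_mulVecMP C).comp continuous_fst) ((cont_mulVecMP C).comp continuous_snd)

/-- Box neighbourhoods in `Rmax^n`. -/
lemma box_nbhd {U : Set (Vec Rmax n)} (hU : IsOpen U) {v : Vec Rmax n} (hv : v ∈ U) :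
    ∃ (u : Vec Rmax n) (l : Fin n → ℝ),
      (∀ k, v k < u k) ∧ (∀ k, v k ≠ ⊥ → ((l k : Rmax) < v k)) ∧
      (∀ w : Vec Rmax n, (∀ k, w k < u k) → (∀ k, v k ≠ ⊥ → ((l k : Rmax) < w k)) → w ∈ U) := by
  obtain ⟨I, t, ht, hsub⟩ := isOpen_pi_iff.mp hU v hv
  have H : ∀ k : Fin n, ∃ (uk : Rmax) (lk : ℝ), v k < uk ∧ (v k ≠ ⊥ → ((lk : Rmax) < v k)) ∧
      (∀ wk : Rmax, wk < uk → (v k ≠ ⊥ → ((lk : Rmax) < wk)) → (k ∈ I → wk ∈ t k)) := by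
    intro k
    rcases hvk : v k with _ | r
    · by_cases hk : k ∈ I
      · have htk : t k ∈ nhds (⊥ : Rmax) := by
          have h0 := (ht k hk).1.mem_nhds (ht k hk).2
          rwa [hvk] at h0
        obtain ⟨a, ha, hIio⟩ := (nhds_bot_basis (α := Rmax)).mem_iff.mp htk
        exact ⟨a, 0, ha, fun h => absurd rfl h, fun wk hwk _ _ => hIio hwk⟩
      · exact ⟨((0:ℝ) : Rmax), 0, WithBot.bot_lt_coe 0, fun h => absurd rfl h,
          fun wk _ _ hkI => absurd hkI hk⟩
    · by_cases hk : k ∈ I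
      · have htk : t k ∈ nhds ((r : ℝ) : Rmax) := by
          have h0 := (ht k hk).1.mem_nhds (ht k hk).2
          rw [hvk] at h0
          exact h0
        obtain ⟨l', u', hmem, hIoo⟩ :=
          (mem_nhds_iff_exists_Ioo_subset' ⟨⊥, WithBot.bot_lt_coe r⟩
            ⟨(r : Rmax) + 1, by exact_mod_cast lt_add_one r⟩).mp htk
        obtain ⟨γ, hγ1, hγ2⟩ := wb_exists_between hmem.1
        exact ⟨u', γ, hmem.2, fun _ => hγ2,
          fun wk hwk hl _ => hIoo ⟨lt_trans hγ1 (hl WithBot.coe_ne_bot), hwk⟩⟩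
      · refine ⟨(r : Rmax) + 1, r - 1, ?_, fun _ => ?_,
          fun wk _ _ hkI => absurd hkI hk⟩
        · show (r : Rmax) < (r : Rmax) + 1
          exact_mod_cast lt_add_one r
        · show ((r - 1 : ℝ) : Rmax) < ((r : ℝ) : Rmax)
          exact_mod_cast sub_one_lt r
  choose u l h1 h2 h3 using H
  refine ⟨u, l, h1, h2, fun w hw hl => hsub ?_⟩
  intro k hk
  exact h3 k (w k) (hw k) (hl k) hk

end MPTop

namespace MPCore
open MPDual MPDual2 MPDual3 MPTop

variable {n : ℕ}

lemma wb_lt_shift (a γ : ℝ) (w : Rmax) : (a : Rmax) + w < (γ : Rmax) ↔ w < ((γ - a : ℝ) : Rmax) := by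
  rcases w with _ | t
  · constructor
    · intro _
      exact WithBot.bot_lt_coe _
    · intro _
      exact lt_of_le_of_lt (le_of_eq (WithBot.add_bot _)) (WithBot.bot_lt_coe _)
  · show (a : Rmax) + (t : Rmax) < (γ : Rmax) ↔ (t : Rmax) < ((γ - a : ℝ) : Rmax)
    rw [← WithBot.coe_add, WithBot.coe_lt_coe, WithBot.coe_lt_coe]
    constructor <;> intro h <;> linarith

lemma finsup_fst {ι : Type*} (s : Finset ι) (f : ι → Vec Rmax n × Vec Rmax n) :
    (s.sup f).1 = s.sup fun i => (f i).1 := by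
  induction s using Finset.cons_induction with
  | empty => rfl
  | cons i s hi ih => rw [Finset.sup_cons, Finset.sup_cons, Prod.fst_sup, ih]

lemma finsup_snd {ι : Type*} (s : Finset ι) (f : ι → Vec Rmax n × Vec Rmax n) :
    (s.sup f).2 = s.sup fun i => (f i).2 := by
  induction s using Finset.cons_induction with
  | empty => rfl
  | cons i s hi ih => rw [Finset.sup_cons, Finset.sup_cons, Prod.snd_sup, ih]

lemma dot_finsup_left {ι : Type*} (s : Finset ι) (g : ι → Vec Rmax n) (c : Vec Rmax n) :
    dotMP (s.sup g) c = s.sup fun i => dotMP (g i) c := by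
  induction s using Finset.cons_induction with
  | empty => simp; exact dotMP_bot_left c
  | cons i s hi ih => rw [Finset.sup_cons, Finset.sup_cons, dotMP_sup_left, ih]

/-- Separation of a point from a closed congruence by a dual vector. -/
theorem sep1 {W : Set (Vec Rmax n × Vec Rmax n)} (hW : IsCongruence W) (hWc : IsClosed W)
    {y xb : Vec Rmax n} (hle : y ≤ xb) (hnm : (y, xb) ∉ W) :
    ∃ z ∈ orthC W, dotMP y z < dotMP xb z := by
  classical
  -- the penalty vector
  set creal : ℝ → Fin n → ℝ := fun M k => if y k = ⊥ then M else -((WithBot.unbotD 0 (y k))) with hcreal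
  set cv : ℝ → Vec Rmax n := fun M k => ((creal M k : ℝ) : Rmax) with hcv
  have hc_bot : ∀ M k, y k = ⊥ → cv M k = ((M : ℝ) : Rmax) := by
    intro M k hk; simp [hcv, hcreal, hk]
  have hc_coe : ∀ M k (r : ℝ), y k = (r : Rmax) → cv M k = ((-r : ℝ) : Rmax) := by
    intro M k r hk
    have hkb : y k ≠ ⊥ := by rw [hk]; exact WithBot.coe_ne_bot
    simp only [hcv, hcreal, if_neg hkb]
    rw [hk]
    rfl
  -- Step 1 : the dichotomy
  have crux : ∃ δ : ℝ, 0 < δ ∧ ∃ M : ℝ, ∀ s T : Vec Rmax n,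
      (s, T) ∈ W → xb ≤ T → ¬ (dotMP s (cv M) ≤ ((δ : ℝ) : Rmax)) := by
    by_contra hcon
    push_neg at hcon
    -- then y is in the closed set S
    have hScl : IsClosed {w : Vec Rmax n | (w, w ⊔ xb) ∈ W} := by
      have hcont : Continuous fun w : Vec Rmax n => (w, w ⊔ xb) := by
        refine Continuous.prodMk continuous_id (continuous_pi fun k => ?_)
        exact (continuous_apply k).max continuous_const
      exact IsClosed.preimage hcont hWc
    have hyS : y ∈ {w : Vec Rmax n | (w, w ⊔ xb) ∈ W} := by
      rw [← hScl.closure_eq]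
      rw [mem_closure_iff]
      intro U hU hyU
      obtain ⟨u, l, hu, hl, hbox⟩ := box_nbhd hU hyU
      -- u k is never ⊥
      have hune : ∀ k, ∃ ρ : ℝ, u k = (ρ : Rmax) := by
        intro k
        have : u k ≠ ⊥ := fun h => by
          have := hu k; rw [h] at this; exact not_lt_bot this
        exact WithBot.ne_bot_iff_exists.mp this |>.imp fun ρ h => h.symm
      choose ρ hρ using hune
      -- the margin δ
      set f : Fin n → ℝ := fun k => if h : ∃ r : ℝ, y k = (r : Rmax) then (ρ k - h.choose) / 2 else 1
        with hf
      set δ : ℝ := ((insert (1:ℝ) (Finset.univ.image f)).min'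
        (Finset.insert_nonempty _ _)) with hδdef
      have hδle : ∀ k, δ ≤ f k := fun k =>
        Finset.min'_le _ _ (Finset.mem_insert_of_mem (Finset.mem_image_of_mem f (Finset.mem_univ k)))
      have hδpos : 0 < δ := by
        rw [hδdef]
        rw [Finset.lt_min'_iff]
        intro b hb
        rcases Finset.mem_insert.mp hb with h | h
        · rw [h]; norm_num
        · obtain ⟨k, _, hk⟩ := Finset.mem_image.mp h
          rw [← hk, hf]
          by_cases hcase : ∃ r : ℝ, y k = (r : Rmax)
          · have hyk := hcase.choose_spec
            have h2 : y k < u k := hu k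
            rw [hyk, hρ k] at h2
            have h3 : hcase.choose < ρ k := by exact_mod_cast h2
            simp only [dif_pos hcase]
            linarith
          · simp only [dif_neg hcase]; norm_num
      -- the penalty M
      set M : ℝ := δ + 1 + ((insert (0:ℝ) (Finset.univ.image fun k => -(ρ k))).max'
        (Finset.insert_nonempty _ _)) with hMdef
      have hMk : ∀ k, δ - M < ρ k := by
        intro k
        have h5 := Finset.le_max' (insert (0:ℝ) (Finset.univ.image fun j => -(ρ j))) (-(ρ k))
          (Finset.mem_insert_of_mem (Finset.mem_image_of_mem _ (Finset.mem_univ k)))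
        rw [hMdef]; linarith
      obtain ⟨s, T, hsT, hxT, hdot⟩ := hcon δ hδpos M
      -- s' = s ⊔ y
      set s' : Vec Rmax n := s ⊔ y with hs'
      have hs'W : (s', T) ∈ W := by
        have h1 := cong_sup_mem hW hsT (cong_refl hW y)
        have h2 : ((s, T) ⊔ (y, y)) = (s', T) := by
          have : T ⊔ y = T := sup_eq_left.mpr (le_trans hle hxT)
          simp [Prod.ext_iff, hs', this]
        rwa [h2] at h1
      have hkey : (s', s' ⊔ xb) ∈ W := by
        have h1 : (T, s') ∈ W := cong_symm hW hs'W
        have h2 := cong_sup_mem hW h1 (cong_refl hW xb)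
        have h3 : ((T, s') ⊔ (xb, xb)) = (T, s' ⊔ xb) := by
          have : T ⊔ xb = T := sup_eq_left.mpr hxT
          simp [Prod.ext_iff, this]
        rw [h3] at h2
        exact cong_trans hW hs'W h2
      refine ⟨s', hbox s' ?_ ?_, hkey⟩
      · -- upper bounds
        intro k
        have hterm : s k + cv M k ≤ ((δ : ℝ) : Rmax) := le_trans (le_dotMP s (cv M) k) hdot
        rcases hyk : y k with _ | r
        · -- bot coordinate
          have hcvk := hc_bot M k hyk
          rw [hcvk] at hterm
          have hsk : s k ≤ ((δ - M : ℝ) : Rmax) := by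
            rw [add_comm] at hterm
            rw [wb_add_le_iff] at hterm
            have : ((-M : ℝ) : Rmax) + ((δ:ℝ) : Rmax) = ((δ - M : ℝ) : Rmax) := by
              rw [← WithBot.coe_add]; ring_nf
            rwa [this] at hterm
          have : s' k = s k := by
            show s k ⊔ y k = s k
            rw [hyk]; exact sup_bot_eq _
          rw [this, hρ k]
          calc s k ≤ ((δ - M : ℝ) : Rmax) := hsk
            _ < ((ρ k : ℝ) : Rmax) := by exact_mod_cast hMk k
        · -- real coordinate
          have hcvk := hc_coe M k r hyk
          rw [hcvk] at hterm
          have hsk : s k ≤ ((δ + r : ℝ) : Rmax) := by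
            rw [add_comm] at hterm
            rw [wb_add_le_iff] at hterm
            have : ((-(-r) : ℝ) : Rmax) + ((δ:ℝ) : Rmax) = ((δ + r : ℝ) : Rmax) := by
              rw [← WithBot.coe_add]; ring_nf
            rwa [this] at hterm
          have hcase : ∃ r' : ℝ, y k = ((r' : ℝ) : Rmax) := ⟨r, hyk⟩
          have hchoose : hcase.choose = r := by
            have h7 : ((hcase.choose : ℝ) : Rmax) = ((r : ℝ) : Rmax) :=
              hcase.choose_spec.symm.trans hyk
            exact_mod_cast h7
          have hfk : δ ≤ (ρ k - r)/2 := by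
            have := hδle k
            rw [hf] at this
            simp only [dif_pos hcase, hchoose] at this
            exact this
          have hru : ((δ + r : ℝ) : Rmax) < u k := by
            rw [hρ k]
            have : δ + r < ρ k := by linarith
            exact_mod_cast this
          show s k ⊔ y k < u k
          rw [hyk]
          exact sup_lt_iff.mpr ⟨lt_of_le_of_lt hsk hru, by rw [← hyk]; exact hu k⟩
      · -- lower bounds
        intro k hk
        exact lt_of_lt_of_le (hl k hk) (le_sup_right : y k ≤ s' k)
    -- conclude (y, xb) ∈ W
    have : (y, y ⊔ xb) ∈ W := hyS
    rw [sup_eq_right.mpr hle] at this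
    exact hnm this
  obtain ⟨δ, hδpos, M, hM⟩ := crux
  set c : Vec Rmax n := cv M with hc
  -- the sets S t and the function F
  set SS : Vec Rmax n → Set Rmax :=
    fun t => {r | ∃ s t' : Vec Rmax n, (s, t') ∈ W ∧ t ≤ t' ∧ r = dotMP s c} with hSS
  have SSne : ∀ t, (SS t).Nonempty := fun t => ⟨dotMP t c, t, t, cong_refl hW t, le_refl t, rfl⟩
  have SSbdd : ∀ t, BddBelow (SS t) := fun t => ⟨⊥, fun r _ => bot_le⟩
  set F : Vec Rmax n → Rmax := fun t => sInf (SS t) with hF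
  set zh : Vec Rmax n := fun k => F (ebasis k) with hzh
  -- F is W-invariant
  have SS_incl : ∀ {u v : Vec Rmax n}, (u, v) ∈ W → SS u ⊆ SS v := by
    intro u v huv r hr
    obtain ⟨s, t', hst, hut, rfl⟩ := hr
    have h1 := cong_sup_mem hW huv (cong_refl hW t')
    have h2 : ((u, v) ⊔ (t', t')) = (t', v ⊔ t') := by
      have : u ⊔ t' = t' := sup_eq_right.mpr hut
      simp [Prod.ext_iff, this]
    rw [h2] at h1
    exact ⟨s, v ⊔ t', cong_trans hW hst h1, le_sup_left, rfl⟩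
  have FI : ∀ {u v : Vec Rmax n}, (u, v) ∈ W → F u = F v := by
    intro u v huv
    exact le_antisymm (csInf_le_csInf (SSbdd u) (SSne v) (SS_incl (cong_symm hW huv)))
      (csInf_le_csInf (SSbdd v) (SSne u) (SS_incl huv))
  -- dot _ zh ≤ F _
  have DZ1 : ∀ u : Vec Rmax n, dotMP u zh ≤ F u := by
    intro u
    refine Finset.sup_le fun k _ => ?_
    show u k + zh k ≤ F u
    rcases huk : u k with _ | a
    · exact le_trans (le_of_eq (WithBot.bot_add _)) bot_le
    · refine le_csInf (SSne u) ?_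
      rintro r ⟨s, t', hst, hut, rfl⟩
      have pair2 : (sm ((-a : ℝ) : Rmax) s, sm ((-a : ℝ) : Rmax) t') ∈ W :=
        cong_smP_mem hW hst ((-a : ℝ) : Rmax)
      have hek : ebasis k ≤ sm ((-a : ℝ) : Rmax) t' := by
        intro j
        by_cases hj : j = k
        · subst hj
          show ebasis j j ≤ ((-a : ℝ) : Rmax) + t' j
          have h1 : ((a : ℝ) : Rmax) ≤ t' j := le_trans (le_of_eq huk.symm) (hut j)
          have h2 := add_le_add_right h1 ((( -a : ℝ)) : Rmax)
          rw [← WithBot.coe_add, neg_add_cancel] at h2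
          simpa [ebasis] using h2
        · show ebasis k j ≤ _
          simp [ebasis, hj]
      have hmem : zh k ≤ dotMP (sm ((-a : ℝ) : Rmax) s) c :=
        csInf_le (SSbdd _) ⟨sm ((-a : ℝ) : Rmax) s, sm ((-a : ℝ) : Rmax) t', pair2, hek, rfl⟩
      rw [dotMP_sm_left] at hmem
      have h3 := add_le_add_right hmem ((a : ℝ) : Rmax)
      have h4 : ((a : ℝ) : Rmax) + (((-a : ℝ) : Rmax) + dotMP s c) = dotMP s c := by
        have := wb_cancel (-a) (dotMP s c)
        rwa [neg_neg] at this
      rw [h4] at h3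
      exact h3
  -- F _ ≤ dot _ zh
  have DZ2 : ∀ v : Vec Rmax n, F v ≤ dotMP v zh := by
    intro v
    by_contra hcon2
    push_neg at hcon2
    obtain ⟨γ, hγ1, hγ2⟩ := wb_exists_between hcon2
    have Hk : ∀ k : Fin n, ∃ st : Vec Rmax n × Vec Rmax n, st ∈ W ∧ ebasis k ≤ st.2 ∧
        (v k + dotMP st.1 c < (γ : Rmax)) := by
      intro k
      rcases hvk : v k with _ | a
      · refine ⟨(ebasis k, ebasis k), cong_refl hW (ebasis k), le_refl _, ?_⟩
        exact lt_of_le_of_lt (le_of_eq (WithBot.bot_add _)) (WithBot.bot_lt_coe γ)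
      · have h1 : ((a : ℝ) : Rmax) + zh k < (γ : Rmax) := by
          calc ((a : ℝ) : Rmax) + zh k = v k + zh k := by rw [hvk]; rfl
            _ ≤ dotMP v zh := le_dotMP v zh k
            _ < (γ : Rmax) := hγ1
        rw [wb_lt_shift] at h1
        obtain ⟨r, hrS, hrlt⟩ := exists_lt_of_csInf_lt (SSne (ebasis k)) h1
        obtain ⟨s, t', hst, hek, rfl⟩ := hrS
        refine ⟨(s, t'), hst, hek, ?_⟩
        show ((a : ℝ) : Rmax) + dotMP s c < (γ : Rmax)
        rw [wb_lt_shift]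
        exact hrlt
    choose st hstW hek hlt using Hk
    set Spair : Vec Rmax n × Vec Rmax n := Finset.univ.sup fun k => smP (v k) (st k) with hSpair
    have hjoin : Spair ∈ W :=
      cong_finsup_mem hW _ _ (fun k _ => cong_smP_mem hW (hstW k) (v k))
    have hfst : Spair.1 = Finset.univ.sup fun k => sm (v k) (st k).1 := by
      rw [hSpair, finsup_fst]
      rfl
    have hsnd : Spair.2 = Finset.univ.sup fun k => sm (v k) (st k).2 := by
      rw [hSpair, finsup_snd]
      rfl
    have hvT : v ≤ Spair.2 := by
      intro j
      rw [hsnd]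
      have h1 : sm (v j) ((st j).2) j ≤ (Finset.univ.sup fun k => sm (v k) (st k).2) j := by
        rw [Finset.sup_apply]
        exact Finset.le_sup (f := fun k => sm (v k) (st k).2 j) (Finset.mem_univ j)
      refine le_trans ?_ h1
      show v j ≤ v j + (st j).2 j
      have h2 : (0 : Rmax) ≤ (st j).2 j := by
        have := hek j j
        simpa [ebasis] using this
      calc v j = v j + 0 := (add_zero _).symm
        _ ≤ v j + (st j).2 j := add_le_add_right h2 _
    have hFv : F v ≤ dotMP Spair.1 c := by
      refine csInf_le (SSbdd v) ⟨Spair.1, Spair.2, ?_, hvT, rfl⟩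
      rwa [Prod.mk.eta]
    have hdlt : dotMP Spair.1 c < (γ : Rmax) := by
      rw [hfst, dot_finsup_left]
      refine Finset.sup_lt_iff (WithBot.bot_lt_coe γ) |>.mpr fun k _ => ?_
      rw [dotMP_sm_left]
      exact hlt k
    exact absurd hγ2 (not_lt.mpr (le_trans hFv (le_of_lt hdlt)))
  -- zh is in the dual of W
  have hzhW : zh ∈ orthC W := by
    intro p hp
    have h1 : (p.1, p.2) ∈ W := by rwa [Prod.mk.eta]
    have h2 := cong_symm hW hp
    exact le_antisymm (le_trans (DZ1 p.1) (le_trans (le_of_eq (FI h1)) (DZ2 p.2)))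
      (le_trans (DZ1 p.2) (le_trans (le_of_eq (FI h2)) (DZ2 p.1)))
  -- separation values
  have hy0 : dotMP y zh ≤ 0 := by
    refine Finset.sup_le fun k _ => ?_
    show y k + zh k ≤ 0
    have hzc : zh k ≤ c k := by
      have := csInf_le (SSbdd (ebasis k)) ⟨ebasis k, ebasis k, cong_refl hW (ebasis k), le_refl _, rfl⟩
      rwa [dotMP_ebasis_left] at this
    rcases hyk : y k with _ | r
    · exact le_trans (le_of_eq (WithBot.bot_add _)) bot_le
    · have h2 : ((r:ℝ):Rmax) + c k = 0 := by
        rw [hc, hc_coe M k r hyk, ← WithBot.coe_add, add_neg_cancel, WithBot.coe_zero]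
      have h1 : ((r:ℝ):Rmax) + zh k ≤ ((r:ℝ):Rmax) + c k := add_le_add_right hzc _
      exact h1.trans (le_of_eq h2)
  have hxδ : ((δ : ℝ) : Rmax) ≤ dotMP xb zh := by
    refine le_trans ?_ (DZ2 xb)
    refine le_csInf (SSne xb) ?_
    rintro r ⟨s, t', hst, hxt, rfl⟩
    exact le_of_lt (not_le.mp (hM s t' hst hxt))
  refine ⟨zh, hzhW, lt_of_le_of_lt hy0 (lt_of_lt_of_le ?_ hxδ)⟩
  show (0 : Rmax) < ((δ : ℝ) : Rmax)
  rw [show (0 : Rmax) = ((0:ℝ) : Rmax) from WithBot.coe_zero.symm]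
  exact_mod_cast hδpos

end MPCore

namespace MPCoreB
open MPDual MPDual2 MPDual3 MPTop MPCore

variable {n : ℕ}

/-- Separation of congruences, general form. -/
theorem cong_sep {W : Set (Vec Rmax n × Vec Rmax n)} (hW : IsCongruence W) (hWc : IsClosed W)
    {x y : Vec Rmax n} (h : (x, y) ∉ W) :
    ∃ z ∈ orthC W, dotMP x z ≠ dotMP y z := by
  by_cases h1 : (x, x ⊔ y) ∈ W
  · have h2 : (x ⊔ y, y) ∉ W := fun h2 => h (cong_trans hW h1 h2)
    have h3 : (y, x ⊔ y) ∉ W := fun h3 => h2 (cong_symm hW h3)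
    obtain ⟨z, hzW, hlt⟩ := sep1 hW hWc le_sup_right h3
    refine ⟨z, hzW, fun heq => ?_⟩
    rw [dotMP_sup_left] at hlt
    rw [heq] at hlt
    exact absurd (sup_idem _ : dotMP y z ⊔ dotMP y z = dotMP y z) (ne_of_gt hlt)
  · obtain ⟨z, hzW, hlt⟩ := sep1 hW hWc le_sup_left h1
    refine ⟨z, hzW, fun heq => ?_⟩
    rw [dotMP_sup_left, heq] at hlt
    exact absurd (sup_idem _ : dotMP y z ⊔ dotMP y z = dotMP y z) (ne_of_gt hlt)

/-- Biduality for closed congruences. -/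
theorem cong_bidual {W : Set (Vec Rmax n × Vec Rmax n)} (hW : IsCongruence W) (hWc : IsClosed W) :
    orthS (orthC W) = W := by
  apply Set.Subset.antisymm
  · intro p hp
    by_contra hpW
    have hpW' : (p.1, p.2) ∉ W := by rwa [Prod.mk.eta]
    obtain ⟨z, hzW, hne⟩ := cong_sep hW hWc hpW'
    exact hne (hp z hzW)
  · intro p hp z hz
    exact hz p hp

end MPCoreB

namespace MPCoreA
open MPDual MPDual2 MPDual3 MPTop MPCore

variable {n : ℕ}

lemma wb_le_shift (m c : ℝ) (w : Rmax) :
    (m : Rmax) + w ≤ (c : Rmax) ↔ w ≤ ((c - m : ℝ) : Rmax) := by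
  rcases w with _ | t
  · constructor
    · intro _; exact le_trans (le_of_eq rfl) bot_le
    · intro _; exact le_trans (le_of_eq (WithBot.add_bot _)) bot_le
  · show (m : Rmax) + (t : Rmax) ≤ (c : Rmax) ↔ (t : Rmax) ≤ ((c - m : ℝ) : Rmax)
    rw [← WithBot.coe_add, WithBot.coe_le_coe, WithBot.coe_le_coe]
    constructor <;> intro h <;> linarith

lemma wb_add_neg_lt (a : Rmax) (β : ℝ) (h : a < (β : Rmax)) :
    a + ((-β : ℝ) : Rmax) < 0 := by
  induction a using WithBot.recBotCoe with
  | bot => exact lt_of_le_of_lt (le_of_eq (WithBot.bot_add _)) (WithBot.bot_lt_coe 0)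
  | coe t =>
    have ht : t < β := by exact_mod_cast h
    show (t : Rmax) + ((-β : ℝ) : Rmax) < 0
    rw [← WithBot.coe_add, show (0 : Rmax) = ((0 : ℝ) : Rmax) from WithBot.coe_zero.symm,
      WithBot.coe_lt_coe]
    linarith

/-- Separation of a point from a closed semimodule by a pair of vectors. -/
theorem semimod_sep {X : Set (Vec Rmax n)} (hX : IsSemimodule X) (h0 : botVec n ∈ X)
    (hXc : IsClosed X) {z : Vec Rmax n} (hz : z ∉ X) :
    ∃ p ∈ orthS X, dotMP p.1 z ≠ dotMP p.2 z := by
  classical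
  -- the projection of z onto X, coordinatewise
  set nu : Vec Rmax n := fun k => sSup {w : Rmax | ∃ x ∈ X, x ≤ z ∧ w = x k} with hnu
  have hSne : ∀ k, {w : Rmax | ∃ x ∈ X, x ≤ z ∧ w = x k}.Nonempty :=
    fun k => ⟨⊥, botVec n, h0, fun j => bot_le, rfl⟩
  have hSbdd : ∀ k, BddAbove {w : Rmax | ∃ x ∈ X, x ≤ z ∧ w = x k} := by
    intro k
    exact ⟨z k, by rintro w ⟨x, hx, hxz, rfl⟩; exact hxz k⟩
  have hnuz : ∀ k, nu k ≤ z k := fun k =>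
    csSup_le (hSne k) (by rintro w ⟨x, hx, hxz, rfl⟩; exact hxz k)
  -- there is a coordinate where nu < z
  have hex_i : ∃ i, nu i < z i := by
    by_contra hcon
    push_neg at hcon
    have heq : ∀ k, nu k = z k := fun k => le_antisymm (hnuz k) (hcon k)
    apply hz
    rw [← hXc.closure_eq, mem_closure_iff]
    intro U hU hzU
    obtain ⟨u, l, hu, hl, hbox⟩ := box_nbhd hU hzU
    have Hk : ∀ k, ∃ xk, xk ∈ X ∧ xk ≤ z ∧ (z k ≠ ⊥ → (l k : Rmax) < xk k) := by
      intro k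
      by_cases hzk : z k = ⊥
      · exact ⟨botVec n, h0, fun j => bot_le, fun h => absurd hzk h⟩
      · have h1 : (l k : Rmax) < nu k := by rw [heq k]; exact hl k hzk
        obtain ⟨w, hwS, hlw⟩ := exists_lt_of_lt_csSup (hSne k) h1
        obtain ⟨x, hx, hxz, rfl⟩ := hwS
        exact ⟨x, hx, hxz, fun _ => hlw⟩
    choose xk hxk1 hxk2 hxk3 using Hk
    set xhat : Vec Rmax n := Finset.univ.sup xk with hxhat
    have hxhatX : xhat ∈ X := semim_finsup_mem hX h0 _ _ fun k _ => hxk1 k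
    have hxhatz : xhat ≤ z := Finset.sup_le fun k _ => hxk2 k
    refine ⟨xhat, hbox xhat ?_ ?_, hxhatX⟩
    · intro k
      exact lt_of_le_of_lt (hxhatz k) (hu k)
    · intro k hk
      refine lt_of_lt_of_le (hxk3 k hk) ?_
      have := Finset.le_sup (f := xk) (Finset.mem_univ k)
      exact this k
  obtain ⟨i, hi⟩ := hex_i
  have hzi_ne : z i ≠ ⊥ := fun h => by rw [h] at hi; exact not_lt_bot hi
  obtain ⟨ri, hri⟩ := WithBot.ne_bot_iff_exists.mp hzi_ne
  -- β strictly between nu i and z i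
  obtain ⟨β, hβ1, hβ2⟩ := wb_exists_between hi
  -- the finite part of -z
  set a0 : Vec Rmax n := fun k => if z k = ⊥ then ⊥ else ((-(WithBot.unbotD 0 (z k)) : ℝ) : Rmax) with ha0
  have ha0_coe : ∀ k (r : ℝ), z k = (r : Rmax) → a0 k = ((-r : ℝ) : Rmax) := by
    intro k r hk
    have hkb : z k ≠ ⊥ := by rw [hk]; exact WithBot.coe_ne_bot
    simp only [ha0, if_neg hkb]
    rw [hk]; rfl
  have ha0_bot : ∀ k, z k = ⊥ → a0 k = ⊥ := by
    intro k hk; simp [ha0, hk]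
  -- the J-part supremum
  set sJ : Vec Rmax n → Rmax :=
    fun x => Finset.univ.sup fun k => if z k = ⊥ then x k else ⊥ with hsJ
  have sJ_le : ∀ (x : Vec Rmax n) k, z k = ⊥ → x k ≤ sJ x := by
    intro x k hk
    have h1 := Finset.le_sup (f := fun k => if z k = ⊥ then x k else ⊥) (Finset.mem_univ k)
    simpa [hk] using h1
  have sJ_sm : ∀ (lam : Rmax) (x : Vec Rmax n), sJ (sm lam x) = lam + sJ x := by
    intro lam x
    rw [hsJ]
    simp only []
    rw [add_finsup]
    refine Finset.sup_congr rfl fun k _ => ?_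
    by_cases hk : z k = ⊥
    · rw [if_pos hk, if_pos hk]
      rfl
    · rw [if_neg hk, if_neg hk, WithBot.add_bot]
  have sJ_sup : ∀ (x y : Vec Rmax n), sJ (x ⊔ y) = sJ x ⊔ sJ y := by
    intro x y
    rw [hsJ]
    simp only []
    rw [← Finset.sup_sup]
    refine Finset.sup_congr rfl fun k _ => ?_
    by_cases hk : z k = ⊥
    · rw [if_pos hk]
      show (x ⊔ y) k = (if z k = ⊥ then x k else ⊥) ⊔ (if z k = ⊥ then y k else ⊥)
      rw [if_pos hk, if_pos hk]
      rfl
    · rw [if_neg hk]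
      show (⊥ : Rmax) = (if z k = ⊥ then x k else ⊥) ⊔ (if z k = ⊥ then y k else ⊥)
      rw [if_neg hk, if_neg hk, sup_idem]
  -- the key scaling inequality
  have star : ∀ x ∈ X, (∀ k, z k = ⊥ → x k = ⊥) → x i ≤ nu i + dotMP x a0 := by
    intro x hxX hxJ
    rcases hlam : dotMP x a0 with _ | lam
    · -- then x = botVec
      have hxi : x i = ⊥ := by
        have h1 : x i + a0 i ≤ ⊥ :=
          le_trans (le_dotMP x a0 i) (le_of_eq hlam)
        rw [ha0_coe i ri hri.symm] at h1
        rcases WithBot.add_eq_bot.mp (le_bot_iff.mp h1) with h | h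
        · exact h
        · exact absurd h WithBot.coe_ne_bot
      rw [hxi]
      exact bot_le
    · set y' : Vec Rmax n := sm ((-lam : ℝ) : Rmax) x with hy'
      have hy'X : y' ∈ X := semim_sm_mem hX hxX _
      have hy'z : y' ≤ z := by
        intro k
        by_cases hk : z k = ⊥
        · show ((-lam : ℝ) : Rmax) + x k ≤ z k
          rw [hxJ k hk, WithBot.add_bot]
          exact bot_le
        · obtain ⟨r, hr⟩ := WithBot.ne_bot_iff_exists.mp hk
          have h1 : ((-r : ℝ) : Rmax) + x k ≤ ((lam : ℝ) : Rmax) := by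
            rw [add_comm, ← ha0_coe k r hr.symm]
            exact le_trans (le_dotMP x a0 k) (le_of_eq hlam)
          rw [wb_add_le_iff, neg_neg, ← WithBot.coe_add] at h1
          show ((-lam : ℝ) : Rmax) + x k ≤ z k
          have h2 := add_le_add_right h1 (((-lam : ℝ)) : Rmax)
          rw [← WithBot.coe_add] at h2
          refine le_trans h2 ?_
          rw [← hr, WithBot.coe_le_coe]
          linarith
      have h3 : y' i ≤ nu i := le_csSup (hSbdd i) ⟨y', hy'X, hy'z, rfl⟩
      have h4 : ((lam : ℝ) : Rmax) + y' i = x i := by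
        show ((lam : ℝ) : Rmax) + (((-lam : ℝ) : Rmax) + x i) = x i
        have := wb_cancel (-lam) (x i)
        rwa [neg_neg] at this
      have h5 := add_le_add_right h3 ((lam : ℝ) : Rmax)
      rw [h4] at h5
      exact le_of_le_of_eq h5 (add_comm _ _)
  -- existence of the penalty constant
  have CM : ∃ Mr : ℝ, ∀ x ∈ X,
      x i ≤ ((β : Rmax) + dotMP x a0) ⊔ (((Mr : ℝ) : Rmax) + sJ x) := by
    by_contra hcon
    push_neg at hcon
    -- the normalized violator families
    set A : ℕ → Set (Vec Rmax n) := fun m =>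
      {x | x ∈ X ∧ x i = 0 ∧ (β : Rmax) + dotMP x a0 ≤ 0 ∧ (((m : ℝ) : ℝ) : Rmax) + sJ x ≤ 0}
      with hA
    have hAne : ∀ m : ℕ, (A m).Nonempty := by
      intro m
      obtain ⟨x, hxX, hviol⟩ := hcon (m : ℝ)
      have hxi_ne : x i ≠ ⊥ := by
        intro h
        rw [h] at hviol
        exact not_lt_bot hviol
      obtain ⟨a, ha⟩ := WithBot.ne_bot_iff_exists.mp hxi_ne
      set y' : Vec Rmax n := sm ((-a : ℝ) : Rmax) x with hy'
      have h1 : (β : Rmax) + dotMP x a0 < x i := lt_of_le_of_lt le_sup_left hviol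
      have h2 : (((m : ℝ)) : Rmax) + sJ x < x i := lt_of_le_of_lt le_sup_right hviol
      refine ⟨y', semim_sm_mem hX hxX _, ?_, ?_, ?_⟩
      · show ((-a : ℝ) : Rmax) + x i = 0
        rw [← ha, ← WithBot.coe_add, neg_add_cancel, WithBot.coe_zero]
      · have h3 : dotMP y' a0 = ((-a : ℝ) : Rmax) + dotMP x a0 := dotMP_sm_left _ x a0
        rw [h3, ← add_assoc, add_comm ((β : ℝ) : Rmax) _, add_assoc]
        have h4 := add_le_add_right (le_of_lt h1) ((-a : ℝ) : Rmax)
        have h5 : ((-a : ℝ) : Rmax) + x i = 0 := by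
          rw [← ha, ← WithBot.coe_add, neg_add_cancel, WithBot.coe_zero]
        rwa [h5] at h4
      · rw [sJ_sm, ← add_assoc, add_comm (((m:ℝ) : ℝ) : Rmax) _, add_assoc]
        have h4 := add_le_add_right (le_of_lt h2) ((-a : ℝ) : Rmax)
        have h5 : ((-a : ℝ) : Rmax) + x i = 0 := by
          rw [← ha, ← WithBot.coe_add, neg_add_cancel, WithBot.coe_zero]
        rwa [h5] at h4
    -- uniform bounds on the families
    have hAbound : ∀ m : ℕ, ∀ x ∈ A m, ∀ k, z k ≠ ⊥ →
        x k ≤ (((WithBot.unbotD 0 (z k)) - β : ℝ) : Rmax) := by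
      intro m x hx k hk
      obtain ⟨r, hr⟩ := WithBot.ne_bot_iff_exists.mp hk
      have h1 : (β : Rmax) + (x k + ((-r : ℝ) : Rmax)) ≤ 0 := by
        refine le_trans (add_le_add_right ?_ _) hx.2.2.1
        rw [← ha0_coe k r hr.symm]
        exact le_dotMP x a0 k
      rw [add_comm (x k) _, ← add_assoc, ← WithBot.coe_add] at h1
      rw [show (0 : Rmax) = ((0:ℝ) : Rmax) from WithBot.coe_zero.symm] at h1
      rw [wb_add_le_iff] at h1
      rw [← WithBot.coe_add] at h1
      have h2 : (↑(-(β + -r)) + (0:ℝ) : ℝ) = r - β := by ring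
      rw [h2] at h1
      have h3 : (WithBot.unbotD 0 (z k)) = r := by rw [← hr]; rfl
      rwa [h3]
    have hAboundJ : ∀ m : ℕ, ∀ x ∈ A m, ∀ k, z k = ⊥ → x k ≤ ((-(m:ℝ) : ℝ) : Rmax) := by
      intro m x hx k hk
      have h1 : (((m:ℝ)) : Rmax) + x k ≤ 0 :=
        le_trans (add_le_add_right (sJ_le x k hk) _) hx.2.2.2
      rw [show (0 : Rmax) = (((m:ℝ) + -(m:ℝ) : ℝ) : Rmax) by rw [add_neg_cancel]; exact WithBot.coe_zero.symm,
        WithBot.coe_add] at h1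
      have h2 := add_le_add_right h1 ((-(m:ℝ) : ℝ) : Rmax)
      rw [wb_cancel, ← add_assoc, ← WithBot.coe_add, neg_add_cancel, WithBot.coe_zero, zero_add] at h2
      exact h2
    have hAmono : ∀ {m m' : ℕ}, m ≤ m' → A m' ⊆ A m := by
      intro m m' hmm x hx
      refine ⟨hx.1, hx.2.1, hx.2.2.1, le_trans (add_le_add_left ?_ _) hx.2.2.2⟩
      exact_mod_cast WithBot.coe_le_coe.mpr (by exact_mod_cast hmm : ((m:ℝ)) ≤ ((m':ℝ)))
    -- coordinatewise suprema
    set num : ℕ → Vec Rmax n := fun m k => sSup {w : Rmax | ∃ x ∈ A m, w = x k} with hnum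
    have hnumSne : ∀ m k, {w : Rmax | ∃ x ∈ A m, w = x k}.Nonempty := by
      intro m k
      obtain ⟨x, hx⟩ := hAne m
      exact ⟨x k, x, hx, rfl⟩
    have hnumSbdd : ∀ m k, BddAbove {w : Rmax | ∃ x ∈ A m, w = x k} := by
      intro m k
      by_cases hk : z k = ⊥
      · exact ⟨((-(m:ℝ) : ℝ) : Rmax), by rintro w ⟨x, hx, rfl⟩; exact hAboundJ m x hx k hk⟩
      · exact ⟨(((WithBot.unbotD 0 (z k)) - β : ℝ) : Rmax),
          by rintro w ⟨x, hx, rfl⟩; exact hAbound m x hx k hk⟩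
    have hnum_mem_le : ∀ m (x : Vec Rmax n), x ∈ A m → ∀ k, x k ≤ num m k :=
      fun m x hx k => le_csSup (hnumSbdd m k) ⟨x, hx, rfl⟩
    have hnum_anti : ∀ {m m' : ℕ}, m ≤ m' → ∀ k, num m' k ≤ num m k := by
      intro m m' hmm k
      refine csSup_le (hnumSne m' k) ?_
      rintro w ⟨x, hx, rfl⟩
      exact hnum_mem_le m x (hAmono hmm hx) k
    -- the limit point
    set xbar : Vec Rmax n := fun k => sInf {w : Rmax | ∃ m : ℕ, w = num m k} with hxbar
    have hxbarSne : ∀ k, {w : Rmax | ∃ m : ℕ, w = num m k}.Nonempty := fun k => ⟨num 0 k, 0, rfl⟩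
    have hxbar_le : ∀ m k, xbar k ≤ num m k :=
      fun m k => csInf_le ⟨⊥, fun w _ => bot_le⟩ ⟨m, rfl⟩
    -- xbar belongs to X by closedness
    have hxbarX : xbar ∈ X := by
      rw [← hXc.closure_eq, mem_closure_iff]
      intro U hU hxU
      obtain ⟨u, l, hu, hl, hbox⟩ := box_nbhd hU hxU
      have hmk : ∀ k, ∃ m : ℕ, num m k < u k := by
        intro k
        obtain ⟨w, hwS, hlt⟩ := exists_lt_of_csInf_lt (hxbarSne k) (hu k)
        obtain ⟨m, rfl⟩ := hwS
        exact ⟨m, hlt⟩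
      choose mk hmk' using hmk
      set mstar : ℕ := Finset.univ.sup mk with hmstar
      have hup : ∀ k, num mstar k < u k := fun k =>
        lt_of_le_of_lt (hnum_anti (Finset.le_sup (Finset.mem_univ k)) k) (hmk' k)
      obtain ⟨x0, hx0⟩ := hAne mstar
      have Hk : ∀ k, ∃ yk, yk ∈ A mstar ∧ (xbar k ≠ ⊥ → (l k : Rmax) < yk k) := by
        intro k
        by_cases hbk : xbar k = ⊥
        · exact ⟨x0, hx0, fun h => absurd hbk h⟩
        · have h1 : (l k : Rmax) < xbar k := hl k hbk
          have h2 : (l k : Rmax) < num mstar k := lt_of_lt_of_le h1 (hxbar_le mstar k)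
          obtain ⟨w, hwS, hlw⟩ := exists_lt_of_lt_csSup (hnumSne mstar k) h2
          obtain ⟨x, hx, rfl⟩ := hwS
          exact ⟨x, hx, fun _ => hlw⟩
      choose yk hyk1 hyk2 using Hk
      have hAsup : ∀ {x y : Vec Rmax n}, x ∈ A mstar → y ∈ A mstar → x ⊔ y ∈ A mstar := by
        intro x y hx hy
        refine ⟨semim_sup_mem hX hx.1 hy.1, ?_, ?_, ?_⟩
        · show x i ⊔ y i = 0
          rw [hx.2.1, hy.2.1, sup_idem]
        · rw [dotMP_sup_left, rmax_add_sup]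
          exact sup_le hx.2.2.1 hy.2.2.1
        · rw [sJ_sup, rmax_add_sup]
          exact sup_le hx.2.2.2 hy.2.2.2
      set yhat : Vec Rmax n := x0 ⊔ Finset.univ.sup yk with hyhat
      have hyhatA : yhat ∈ A mstar := by
        have hgen : ∀ s : Finset (Fin n), x0 ⊔ s.sup yk ∈ A mstar := by
          intro s
          induction s using Finset.cons_induction with
          | empty => simpa using hx0
          | cons a s ha ih =>
              rw [Finset.sup_cons, ← sup_assoc, sup_comm x0 (yk a), sup_assoc]
              exact hAsup (hyk1 a) ih
        exact hgen Finset.univ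
      refine ⟨yhat, hbox yhat ?_ ?_, hyhatA.1⟩
      · intro k
        exact lt_of_le_of_lt (hnum_mem_le mstar yhat hyhatA k) (hup k)
      · intro k hk
        refine lt_of_lt_of_le (hyk2 k hk) ?_
        have h1 : yk k k ≤ (Finset.univ.sup yk) k := by
          rw [Finset.sup_apply]
          exact Finset.le_sup (f := fun j => yk j k) (Finset.mem_univ k)
        exact le_trans h1 ((le_sup_right : Finset.univ.sup yk ≤ yhat) k)
    -- coordinates of xbar
    have hxbari : xbar i = (0 : Rmax) := by
      have hnum_i : ∀ m, num m i = (0 : Rmax) := by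
        intro m
        refine le_antisymm (csSup_le (hnumSne m i) ?_) ?_
        · rintro w ⟨x, hx, rfl⟩
          exact le_of_eq hx.2.1
        · obtain ⟨x, hx⟩ := hAne m
          have h1 := le_csSup (hnumSbdd m i) ⟨x, hx, rfl⟩
          rwa [hx.2.1] at h1
      refine le_antisymm ?_ ?_
      · have h1 := hxbar_le 0 i
        rwa [hnum_i 0] at h1
      · refine le_csInf (hxbarSne i) ?_
        rintro w ⟨m, rfl⟩
        rw [hnum_i m]
    have hxbarJ : ∀ k, z k = ⊥ → xbar k = ⊥ := by
      intro k hk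
      refine wb_eq_bot_of_forall fun m => ?_
      refine le_trans (hxbar_le m k) (csSup_le (hnumSne m k) ?_)
      rintro w ⟨x, hx, rfl⟩
      exact hAboundJ m x hx k hk
    have hdot_xbar : dotMP xbar a0 ≤ ((-β : ℝ) : Rmax) := by
      refine Finset.sup_le fun k _ => ?_
      show xbar k + a0 k ≤ _
      by_cases hk : z k = ⊥
      · rw [ha0_bot k hk, WithBot.add_bot]
        exact bot_le
      · obtain ⟨r, hr⟩ := WithBot.ne_bot_iff_exists.mp hk
        have h2 : xbar k ≤ ((r - β : ℝ) : Rmax) := by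
          refine le_trans (hxbar_le 0 k) (csSup_le (hnumSne 0 k) ?_)
          rintro w ⟨x, hx, rfl⟩
          have h3 := hAbound 0 x hx k hk
          rwa [show (WithBot.unbotD 0 (z k)) = r by rw [← hr]; rfl] at h3
        rw [ha0_coe k r hr.symm]
        calc xbar k + ((-r : ℝ) : Rmax) ≤ ((r - β : ℝ) : Rmax) + ((-r : ℝ) : Rmax) :=
            add_le_add_left h2 _
          _ = ((-β : ℝ) : Rmax) := by
            rw [← WithBot.coe_add]
            congr 1
            ring
    have hfin := star xbar hxbarX hxbarJ
    rw [hxbari] at hfin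
    have h2 : nu i + dotMP xbar a0 < 0 := by
      calc nu i + dotMP xbar a0 ≤ nu i + ((-β : ℝ) : Rmax) := add_le_add_right hdot_xbar _
        _ < 0 := wb_add_neg_lt (nu i) β hβ1
    exact absurd hfin (not_le.mpr h2)
  obtain ⟨Mr, hMr⟩ := CM
  -- the separating pair
  set bb : Vec Rmax n := fun k => ((β : Rmax) + a0 k) ⊔ (if z k = ⊥ then ((Mr : ℝ) : Rmax) else ⊥)
    with hbb
  have hdotb : ∀ x : Vec Rmax n,
      dotMP bb x = ((β : Rmax) + dotMP a0 x) ⊔ (((Mr : ℝ) : Rmax) + sJ x) := by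
    intro x
    show (Finset.univ.sup fun k => bb k + x k) = _
    have h1 : (fun k => bb k + x k)
        = (fun k => ((β : Rmax) + a0 k) + x k) ⊔ (fun k => (if z k = ⊥ then ((Mr : ℝ) : Rmax) else ⊥) + x k) :=
      funext fun k => rmax_sup_add (x k) _ _
    rw [h1, Finset.sup_sup]
    congr 1
    · show _ = (β : Rmax) + Finset.univ.sup fun k => a0 k + x k
      rw [add_finsup]
      exact Finset.sup_congr rfl fun k _ => add_assoc _ _ _
    · show _ = ((Mr : ℝ) : Rmax) + Finset.univ.sup fun k => if z k = ⊥ then x k else ⊥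
      rw [add_finsup]
      refine Finset.sup_congr rfl fun k _ => ?_
      by_cases hk : z k = ⊥
      · rw [if_pos hk, if_pos hk]
      · rw [if_neg hk, if_neg hk, WithBot.bot_add, WithBot.add_bot]
  refine ⟨(ebasis i ⊔ bb, bb), ?_, ?_⟩
  · intro x hx
    show dotMP (ebasis i ⊔ bb) x = dotMP bb x
    rw [dotMP_sup_left, dotMP_ebasis_left]
    refine sup_eq_right.mpr ?_
    rw [hdotb]
    have h1 := hMr x hx
    rwa [dotMP_comm x a0] at h1
  · show dotMP (ebasis i ⊔ bb) z ≠ dotMP bb z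
    have hda0z : dotMP a0 z = (0 : Rmax) := by
      refine le_antisymm (Finset.sup_le fun k _ => ?_) ?_
      · show a0 k + z k ≤ 0
        by_cases hk : z k = ⊥
        · rw [ha0_bot k hk, WithBot.bot_add]
          exact bot_le
        · obtain ⟨r, hr⟩ := WithBot.ne_bot_iff_exists.mp hk
          rw [ha0_coe k r hr.symm, ← hr, ← WithBot.coe_add, neg_add_cancel, WithBot.coe_zero]
      · have h1 := le_dotMP a0 z i
        rwa [ha0_coe i ri hri.symm, ← hri, ← WithBot.coe_add, neg_add_cancel, WithBot.coe_zero] at h1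
    have hsJz : sJ z = ⊥ := by
      refine le_bot_iff.mp (Finset.sup_le fun k _ => ?_)
      by_cases hk : z k = ⊥
      · rw [if_pos hk, hk]
      · rw [if_neg hk]
    have hbz : dotMP bb z = (β : Rmax) := by
      rw [hdotb, hda0z, hsJz, add_zero, WithBot.add_bot]
      exact sup_bot_eq _
    rw [dotMP_sup_left, dotMP_ebasis_left, hbz]
    rw [sup_eq_left.mpr (le_of_lt hβ2)]
    exact ne_of_gt hβ2

end MPCoreA

namespace MPSum
open MPDual MPDual2 MPDual3 MPTop MPCore MPCoreA

variable {n q : ℕ}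

lemma sm_sup (lam : Rmax) (x y : Vec Rmax n) : sm lam (x ⊔ y) = sm lam x ⊔ sm lam y :=
  funext fun k => rmax_add_sup lam (x k) (y k)

theorem setSum_im_closed {Z : Set (Vec Rmax n)} (hZc : IsClosed Z)
    (B : Matrix (Fin n) (Fin q) Rmax) : IsClosed (setSum Z (imM B)) := by
  classical
  set X := setSum Z (imM B) with hXdef
  refine isClosed_of_closure_subset ?_
  intro z hzcl
  -- upper bound box around z
  set ub : Vec Rmax n := fun k => if z k = ⊥ then ((0:ℝ) : Rmax) else z k + ((1:ℝ) : Rmax)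
    with hub
  have hzub : ∀ k, z k < ub k := by
    intro k
    by_cases hk : z k = ⊥
    · rw [hub]
      simp only [if_pos hk, hk]
      exact WithBot.bot_lt_coe 0
    · obtain ⟨r, hr⟩ := WithBot.ne_bot_iff_exists.mp hk
      rw [hub]
      simp only [if_neg hk]
      rw [← hr, ← WithBot.coe_add, WithBot.coe_lt_coe]
      linarith
  set V : Set (Vec Rmax n) := {x | ∀ k, x k < ub k} with hV
  have hVopen : IsOpen V := by
    have : V = ⋂ k, (fun x : Vec Rmax n => x k) ⁻¹' Set.Iio (ub k) := by
      ext x; simp [hV, Set.mem_iInter]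
    rw [this]
    exact isOpen_iInter_of_finite fun k => (continuous_apply k).isOpen_preimage _ isOpen_Iio
  have hzV : z ∈ V := fun k => hzub k
  -- z is in the closure of X ∩ V
  have hzcl2 : z ∈ closure (X ∩ V) := by
    rw [mem_closure_iff]
    intro U hU hzU
    obtain ⟨x, ⟨hxU, hxV⟩, hxX⟩ := mem_closure_iff.mp hzcl (U ∩ V) (hU.inter hVopen) ⟨hzU, hzV⟩
    exact ⟨x, hxU, hxX, hxV⟩
  -- residual bound
  set rb : Vec Rmax q := fun j => if h : ∃ k, B k j ≠ ⊥ then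
      sInf {w : Rmax | ∃ k, B k j ≠ ⊥ ∧ w = ub k + ((-(WithBot.unbotD 0 (B k j)) : ℝ) : Rmax)} else ⊥
    with hrb
  -- normalization of controls
  set nm : Vec Rmax q → Vec Rmax q := fun u j => if ∃ k, B k j ≠ ⊥ then u j else ⊥ with hnm
  have hN1 : ∀ u, mulVecMP B (nm u) = mulVecMP B u := by
    intro u
    funext k
    refine Finset.sup_congr rfl fun j _ => ?_
    by_cases hj : ∃ k', B k' j ≠ ⊥
    · rw [hnm]; simp only [if_pos hj]
    · push_neg at hj
      rw [hj k, WithBot.bot_add, WithBot.bot_add]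
  have hN2 : ∀ u, mulVecMP B u ≤ ub → nm u ≤ rb := by
    intro u hu j
    by_cases hj : ∃ k', B k' j ≠ ⊥
    · rw [hnm, hrb]
      simp only [if_pos hj, dif_pos hj]
      refine le_csInf ?_ ?_
      · obtain ⟨k, hk⟩ := hj
        exact ⟨_, k, hk, rfl⟩
      · rintro w ⟨k, hk, rfl⟩
        obtain ⟨b, hb⟩ := WithBot.ne_bot_iff_exists.mp hk
        have h1 : B k j + u j ≤ ub k :=
          le_trans (le_dotMP (fun j => B k j) u j) (hu k)
        rw [← hb] at h1
        rw [wb_add_le_iff] at h1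
        have h2 : (WithBot.unbotD 0 (B k j)) = b := by rw [← hb]; rfl
        rw [h2, add_comm]
        exact h1
    · rw [hnm, hrb]
      simp only [if_neg hj, dif_neg hj]
      exact le_refl ⊥
  -- the compact parameter set
  have hK1 : IsCompact (Set.Icc (botVec n) ub ∩ Z) := isCompact_Icc.inter_right hZc
  have hK2 : IsCompact (Set.Icc (botVec q) rb) := isCompact_Icc
  set Phi : Vec Rmax n × Vec Rmax q → Vec Rmax n := fun p => p.1 ⊔ mulVecMP B p.2 with hPhi
  have hPhic : Continuous Phi := by
    refine continuous_pi fun k => ?_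
    exact Continuous.max ((continuous_apply k).comp continuous_fst)
      ((continuous_apply k).comp ((cont_mulVecMP B).comp continuous_snd))
  have hIm : IsCompact (Phi '' ((Set.Icc (botVec n) ub ∩ Z) ×ˢ Set.Icc (botVec q) rb)) :=
    (hK1.prod hK2).image hPhic
  have hsub : X ∩ V ⊆ Phi '' ((Set.Icc (botVec n) ub ∩ Z) ×ˢ Set.Icc (botVec q) rb) := by
    rintro x ⟨⟨w, hwZ, y, ⟨u, rfl⟩, rfl⟩, hxV⟩
    have hxub : w ⊔ mulVecMP B u ≤ ub := fun k => le_of_lt (hxV k)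
    have hwub : w ≤ ub := le_trans le_sup_left hxub
    have hBu : mulVecMP B u ≤ ub := le_trans le_sup_right hxub
    refine ⟨(w, nm u), ⟨⟨⟨fun k => bot_le, hwub⟩, hwZ⟩, ⟨fun j => bot_le, hN2 u hBu⟩⟩, ?_⟩
    show w ⊔ mulVecMP B (nm u) = w ⊔ mulVecMP B u
    rw [hN1]
  have hzIm : z ∈ Phi '' ((Set.Icc (botVec n) ub ∩ Z) ×ˢ Set.Icc (botVec q) rb) :=
    (hIm.isClosed.closure_subset_iff.mpr hsub) hzcl2
  obtain ⟨⟨w, u⟩, ⟨⟨_, hwZ⟩, _⟩, rfl⟩ := hzIm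
  exact ⟨w, hwZ, mulVecMP B u, ⟨u, rfl⟩, rfl⟩

end MPSum


open MPDual MPDual2 MPDual3 MPTop MPCore MPCoreB MPCoreA MPSum in
/-- (Duality theorem.) Let `V` be a congruence on `ℝ_max^n`.
For every closed congruence `W`: `W` is a `(C,A)`-conditioned invariant
congruence containing `V` iff `W^⊤` is an `(Aᵗ,Cᵗ)`-controlled invariant
semimodule contained in `V^⊤`. -/
theorem duality_theorem
    {n q : ℕ} (A : Matrix (Fin n) (Fin n) Rmax) (C : Matrix (Fin q) (Fin n) Rmax)
    (V : Set (Vec Rmax n × Vec Rmax n)) (hV : IsCongruence V)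
    (W : Set (Vec Rmax n × Vec Rmax n)) (hW : IsCongruence W) (hWc : IsClosed W) :
    (CondInv C A W ∧ V ⊆ W) ↔
      (ContrInv A.transpose C.transpose (orthC W) ∧ orthC W ⊆ orthC V) := by

  classical
  set X := setSum (orthC W) (imM C.transpose) with hX
  have hXsm : IsSemimodule X := by
    rintro x ⟨w1, hw1, y1, ⟨u1, rfl⟩, rfl⟩ y ⟨w2, hw2, y2, ⟨u2, rfl⟩, rfl⟩ lam mu
    refine ⟨sm lam w1 ⊔ sm mu w2, orthC_semimodule W w1 hw1 w2 hw2 lam mu,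
      mulVecMP C.transpose (sm lam u1 ⊔ sm mu u2), ⟨sm lam u1 ⊔ sm mu u2, rfl⟩, ?_⟩
    rw [sm_sup, sm_sup, ← mulVecMP_sm, ← mulVecMP_sm, mulVecMP_sup]
    exact sup_sup_sup_comm _ _ _ _
  have hbotX : botVec n ∈ X := by
    refine ⟨botVec n, botVec_mem_orthC W, mulVecMP C.transpose (botVec q), ⟨botVec q, rfl⟩, ?_⟩
    rw [mulVecMP_bot]
    exact (sup_idem _).symm
  have hOX : orthC W ⊆ X := by
    intro w hw
    refine ⟨w, hw, mulVecMP C.transpose (botVec q), ⟨botVec q, rfl⟩, ?_⟩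
    rw [mulVecMP_bot]
    exact (funext fun k => (sup_bot_eq (w k)).symm : w = w ⊔ botVec n)
  have hIX : imM C.transpose ⊆ X := by
    intro y hy
    exact ⟨botVec n, botVec_mem_orthC W, y, hy,
      (funext fun k => (bot_sup_eq (y k)).symm : y = botVec n ⊔ y)⟩
  have hXc : IsClosed X := setSum_im_closed (closed_orthC W) C.transpose
  have horthX : orthS X ⊆ W ∩ kerM C := by
    intro p hp
    constructor
    · have h1 := orthS_antitone hOX hp
      rwa [cong_bidual hW hWc] at h1
    · have h2 := orthS_antitone hIX hp
      rwa [← kerM_eq_orthS] at h2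
  constructor
  · rintro ⟨hCond, hVW⟩
    refine ⟨?_, orthC_antitone hVW⟩
    rintro y ⟨zz, hzzW, rfl⟩
    show mulVecMP A.transpose zz ∈ X
    by_contra hnot
    obtain ⟨p, hpX, hpne⟩ := semimod_sep hXsm hbotX hXc hnot
    obtain ⟨hpW, hpK⟩ := horthX hpX
    apply hpne
    rw [← adjointMP, ← adjointMP]
    exact hzzW (mulVecMP A p.1, mulVecMP A p.2) (hCond ⟨p, ⟨hpW, hpK⟩, rfl⟩)
  · rintro ⟨hContr, hdual⟩
    constructor
    · rintro p' ⟨w, ⟨hwW, hwK⟩, rfl⟩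
      rw [← cong_bidual hW hWc]
      intro zz hzz
      obtain ⟨wz, hwz, yz, ⟨uu, rfl⟩, heq⟩ := hContr ⟨zz, hzz, rfl⟩
      show dotMP (mulVecMP A w.1) zz = dotMP (mulVecMP A w.2) zz
      rw [adjointMP, adjointMP, heq, dotMP_sup_right, dotMP_sup_right, hwz w hwW]
      have h3 : dotMP w.1 (mulVecMP C.transpose uu) = dotMP w.2 (mulVecMP C.transpose uu) := by
        rw [← adjointMP, ← adjointMP, hwK]
      rw [h3]
    · intro p hpV
      rw [← cong_bidual hW hWc]
      intro zz hzz
      exact hdual hzz p hpV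
end

section
/- Let V ⊂ (ℝ_max^n)² be a congruence, A ∈ ℝ_max^{n×n}, C ∈ ℝ_max^{q×n}, and set K := V^⊤. Let K*(Aᵗ,Cᵗ) denote the maximal (Aᵗ,Cᵗ)-controlled invariant semimodule contained in K. Then (K*(Aᵗ,Cᵗ))^⊥ is the minimal closed (C,A)-conditioned invariant congruence containing V: it is closed, (C,A)-conditioned invariant, contains V, and is contained in every closed (C,A)-conditioned invariant congruence containing V. Consequently the minimal (C,A)-conditioned invariant congruence V*(C,A) containing V satisfies V*(C,A) ⊆ (K*(Aᵗ,Cᵗ))^⊥, with equality whenever V*(C,A) is closed. -/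
section Helpers
open Filter Topology

noncomputable section
namespace MaxPlus

variable {n m p q : ℕ}

/-- all-bottom vector -/
def botv (n : ℕ) : Vec Rmax n := fun _ => ⊥

/-- max-plus unit vector -/
def unit {n : ℕ} (j : Fin n) : Vec Rmax n := fun i => if i = j then 0 else ⊥

lemma bot_or_coe (a : Rmax) : a = ⊥ ∨ ∃ s : ℝ, a = ↑s := by
  induction a using WithBot.recBotCoe with
  | bot => exact Or.inl rfl
  | coe s => exact Or.inr ⟨s, rfl⟩

lemma add_sup' (c a b : Rmax) : c + (a ⊔ b) = (c + a) ⊔ (c + b) := (max_add_add_left c a b).symm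
lemma sup_add' (a b c : Rmax) : (a ⊔ b) + c = (a + c) ⊔ (b + c) := (max_add_add_right a b c).symm

lemma sm_zero (x : Vec Rmax n) : sm (0:Rmax) x = x := funext fun _ => zero_add _
lemma sm_bot (x : Vec Rmax n) : sm (⊥:Rmax) x = botv n := funext fun _ => WithBot.bot_add _
lemma sm_sm (a b : Rmax) (x : Vec Rmax n) : sm a (sm b x) = sm (a+b) x :=
  funext fun _ => (add_assoc _ _ _).symm
lemma sm_sup (a : Rmax) (x y : Vec Rmax n) : sm a (x ⊔ y) = sm a x ⊔ sm a y :=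
  funext fun i => add_sup' a (x i) (y i)
lemma sm_apply (a : Rmax) (x : Vec Rmax n) (i : Fin n) : sm a x i = a + x i := rfl
lemma sm_mono {a : Rmax} {x y : Vec Rmax n} (h : x ≤ y) : sm a x ≤ sm a y :=
  fun i => add_le_add_right (h i) a
lemma sm_coe_neg_cancel (r : ℝ) (x : Vec Rmax n) : sm (↑(-r) : Rmax) (sm (↑r : Rmax) x) = x := by
  rw [sm_sm, ← WithBot.coe_add]; norm_num [sm_zero]

lemma smP_zero (p : Vec Rmax n × Vec Rmax n) : smP (0:Rmax) p = p :=
  Prod.ext (sm_zero _) (sm_zero _)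

lemma congJoin {W : Set (Vec Rmax n × Vec Rmax n)} (h : IsCongruence W)
    {p q : Vec Rmax n × Vec Rmax n} (hp : p ∈ W) (hq : q ∈ W) : p ⊔ q ∈ W := by
  have := h.2 p hp q hq 0 0
  rwa [smP_zero, smP_zero] at this

lemma congScale {W : Set (Vec Rmax n × Vec Rmax n)} (h : IsCongruence W)
    {p : Vec Rmax n × Vec Rmax n} (hp : p ∈ W) (a : Rmax) : smP a p ∈ W := by
  have := h.2 p hp p hp a a
  rwa [sup_idem] at this

lemma smJoin {X : Set (Vec Rmax n)} (h : IsSemimodule X)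
    {x y : Vec Rmax n} (hx : x ∈ X) (hy : y ∈ X) : x ⊔ y ∈ X := by
  have := h x hx y hy 0 0
  rwa [sm_zero, sm_zero] at this

lemma smScale {X : Set (Vec Rmax n)} (h : IsSemimodule X)
    {x : Vec Rmax n} (hx : x ∈ X) (a : Rmax) : sm a x ∈ X := by
  have := h x hx x hx a a
  rwa [sup_idem] at this

lemma smBotvMem {X : Set (Vec Rmax n)} (h : IsSemimodule X)
    {x : Vec Rmax n} (hx : x ∈ X) : botv n ∈ X := by
  have := smScale h hx ⊥
  rwa [sm_bot] at this

lemma botv_eq_bot : botv n = (⊥ : Vec Rmax n) := rfl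

lemma smFinsupMem {X : Set (Vec Rmax n)} (h : IsSemimodule X)
    (hbot : botv n ∈ X) {ι : Type*} (S : Finset ι) (f : ι → Vec Rmax n)
    (hf : ∀ i ∈ S, f i ∈ X) : S.sup f ∈ X := by
  induction S using Finset.cons_induction with
  | empty => simpa [botv_eq_bot] using hbot
  | cons j S hj ih =>
      rw [Finset.sup_cons]
      exact smJoin h (hf _ (Finset.mem_cons_self _ _))
        (ih fun i hi => hf i (Finset.mem_cons_of_mem hi))

/-- `a + S.sup f = S.sup (a + f ·)` in `Rmax`. -/
lemma add_finsetSup {ι : Type*} (S : Finset ι) (f : ι → Rmax) (a : Rmax) :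
    a + S.sup f = S.sup (fun i => a + f i) := by
  induction S using Finset.cons_induction with
  | empty => simp
  | cons j S hj ih => rw [Finset.sup_cons, Finset.sup_cons, add_sup', ih]

lemma finsetSup_add {ι : Type*} (S : Finset ι) (f : ι → Rmax) (a : Rmax) :
    S.sup f + a = S.sup (fun i => f i + a) := by
  induction S using Finset.cons_induction with
  | empty => simp
  | cons j S hj ih => rw [Finset.sup_cons, Finset.sup_cons, sup_add', ih]

lemma dot_comm (u v : Vec Rmax n) : dotMP u v = dotMP v u := by
  unfold dotMP; exact Finset.sup_congr rfl fun i _ => add_comm _ _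

lemma le_dot (u v : Vec Rmax n) (i : Fin n) : u i + v i ≤ dotMP u v := by
  unfold dotMP; exact Finset.le_sup (f := fun i => u i + v i) (Finset.mem_univ i)

lemma dot_le_iff {u v : Vec Rmax n} {c : Rmax} : dotMP u v ≤ c ↔ ∀ i, u i + v i ≤ c := by
  unfold dotMP; rw [Finset.sup_le_iff]; simp

lemma dot_sup_left (x y z : Vec Rmax n) : dotMP (x ⊔ y) z = dotMP x z ⊔ dotMP y z := by
  unfold dotMP
  rw [← Finset.sup_sup]
  exact Finset.sup_congr rfl fun i _ => by simp [Pi.sup_apply, sup_add']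

lemma dot_sm_left (a : Rmax) (x z : Vec Rmax n) : dotMP (sm a x) z = a + dotMP x z := by
  unfold dotMP
  rw [add_finsetSup]
  exact Finset.sup_congr rfl fun i _ => by rw [sm_apply, add_assoc]

lemma dot_botv (z : Vec Rmax n) : dotMP (botv n) z = ⊥ := by
  simp [dotMP, botv]

lemma dot_bot_right (z : Vec Rmax n) : dotMP z (botv n) = ⊥ := by
  rw [dot_comm]; exact dot_botv z

lemma dot_mono_right (u : Vec Rmax n) {v w : Vec Rmax n} (h : v ≤ w) :
    dotMP u v ≤ dotMP u w :=
  Finset.sup_mono_fun fun i _ => add_le_add_right (h i) (u i)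

lemma dot_unit (j : Fin n) (v : Vec Rmax n) : dotMP (unit j) v = v j := by
  apply le_antisymm
  · rw [dot_le_iff]
    intro i
    by_cases h : i = j
    · subst h; simp [unit]
    · simp [unit, h]
  · have := le_dot (unit j) v j
    simpa [unit] using this

lemma mulVec_apply (B : Matrix (Fin m) (Fin n) Rmax) (x : Vec Rmax n) (i : Fin m) :
    mulVecMP B x i = Finset.univ.sup fun k => B i k + x k := rfl

lemma mulVec_sup (B : Matrix (Fin m) (Fin n) Rmax) (u v : Vec Rmax n) :
    mulVecMP B (u ⊔ v) = mulVecMP B u ⊔ mulVecMP B v := by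
  funext i
  rw [Pi.sup_apply, mulVec_apply, mulVec_apply, mulVec_apply, ← Finset.sup_sup]
  exact Finset.sup_congr rfl fun k _ => by simp [Pi.sup_apply, add_sup']

lemma mulVec_sm (B : Matrix (Fin m) (Fin n) Rmax) (a : Rmax) (u : Vec Rmax n) :
    mulVecMP B (sm a u) = sm a (mulVecMP B u) := by
  funext i
  rw [mulVec_apply, sm_apply, mulVec_apply, add_finsetSup]
  exact Finset.sup_congr rfl fun k _ => by
    rw [sm_apply, ← add_assoc, add_comm (B i k) a, add_assoc]

lemma mulVec_botv (B : Matrix (Fin m) (Fin n) Rmax) : mulVecMP B (botv n) = botv m := by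
  funext i; simp [mulVec_apply, botv]

lemma mulVec_unit (B : Matrix (Fin m) (Fin n) Rmax) (j : Fin n) :
    mulVecMP B (unit j) = fun i => B i j := by
  funext i
  rw [mulVec_apply]
  apply le_antisymm
  · rw [Finset.sup_le_iff]
    intro k _
    by_cases h : k = j
    · subst h; simp [unit]
    · simp [unit, h]
  · have := Finset.le_sup (f := fun k => B i k + unit j k) (Finset.mem_univ j)
    simpa [unit] using this

lemma dot_mulVec (B : Matrix (Fin m) (Fin n) Rmax) (v : Vec Rmax n) (w : Vec Rmax m) :
    dotMP (mulVecMP B v) w = dotMP v (mulVecMP B.transpose w) := by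
  unfold dotMP
  calc Finset.univ.sup (fun i => mulVecMP B v i + w i)
      = Finset.univ.sup (fun i => Finset.univ.sup (fun k => B i k + v k + w i)) := by
        exact Finset.sup_congr rfl fun i _ => by rw [mulVec_apply, finsetSup_add]
    _ = Finset.univ.sup (fun k => Finset.univ.sup (fun i => B i k + v k + w i)) := by
        rw [Finset.sup_comm]
    _ = Finset.univ.sup (fun k => v k + mulVecMP B.transpose w k) := by
        refine Finset.sup_congr rfl fun k _ => ?_
        rw [mulVec_apply, add_finsetSup]
        exact Finset.sup_congr rfl fun i _ => by
          rw [Matrix.transpose_apply, add_comm (B i k) (v k), add_assoc]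

end MaxPlus
end
end Helpers
section Helpers2
open Filter Topology
noncomputable section
namespace MaxPlus

variable {n m : ℕ}

lemma tendsto_coe_Rmax {α : Type*} {l : Filter α} {f : α → ℝ} {a : ℝ}
    (h : Tendsto f l (𝓝 a)) : Tendsto (fun x => (↑(f x) : Rmax)) l (𝓝 (↑a : Rmax)) := by
  rw [tendsto_order]
  constructor
  · intro b hb
    induction b using WithBot.recBotCoe with
    | bot => exact Eventually.of_forall fun x => WithBot.bot_lt_coe _
    | coe r =>
        have hr : r < a := WithBot.coe_lt_coe.1 hb
        exact (h.eventually (eventually_gt_nhds hr)).mono fun x hx => WithBot.coe_lt_coe.2 hx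
  · intro b hb
    induction b using WithBot.recBotCoe with
    | bot => exact absurd hb (not_lt_bot)
    | coe r =>
        have hr : a < r := WithBot.coe_lt_coe.1 hb
        exact (h.eventually (eventually_lt_nhds hr)).mono fun x hx => WithBot.coe_lt_coe.2 hx

lemma tendsto_bot_Rmax {α : Type*} {l : Filter α} {f : α → ℝ}
    (h : Tendsto f l atBot) : Tendsto (fun x => (↑(f x) : Rmax)) l (𝓝 (⊥ : Rmax)) := by
  rw [tendsto_order]
  refine ⟨fun b hb => absurd hb not_lt_bot, fun b hb => ?_⟩
  induction b using WithBot.recBotCoe with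
  | bot => exact absurd hb (lt_irrefl _)
  | coe r =>
      exact (h.eventually (eventually_le_atBot (r - 1))).mono fun x hx =>
        WithBot.coe_lt_coe.2 (lt_of_le_of_lt hx (by linarith))

lemma add_coe_lt_coe_iff (x : Rmax) (r u : ℝ) : x + ↑r < ↑u ↔ x < ↑(u - r) := by
  induction x using WithBot.recBotCoe with
  | bot => simp [WithBot.bot_add, WithBot.bot_lt_coe]
  | coe s =>
      rw [← WithBot.coe_add, WithBot.coe_lt_coe, WithBot.coe_lt_coe]
      constructor <;> intro <;> linarith

lemma coe_lt_add_coe_iff (x : Rmax) (r u : ℝ) : (↑u : Rmax) < x + ↑r ↔ ↑(u - r) < x := by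
  induction x using WithBot.recBotCoe with
  | bot => simp [WithBot.add_bot]
  | coe s =>
      rw [← WithBot.coe_add, WithBot.coe_lt_coe, WithBot.coe_lt_coe]
      constructor <;> intro <;> linarith

lemma continuous_add_const (c : Rmax) : Continuous (fun a : Rmax => a + c) := by
  induction c using WithBot.recBotCoe with
  | bot => simpa [WithBot.add_bot] using continuous_const (y := (⊥:Rmax))
  | coe r =>
      rw [continuous_iff_continuousAt]
      intro a
      rw [ContinuousAt, tendsto_order]
      constructor
      · intro b hb
        induction b using WithBot.recBotCoe with
        | bot =>
            have ha : a ≠ ⊥ := by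
              rintro rfl; rw [WithBot.bot_add] at hb; exact not_lt_bot hb
            obtain ⟨s, hs⟩ := Option.ne_none_iff_exists'.mp ha
            have hlt : (↑(s - 1):Rmax) < a := by
              rw [hs]; exact WithBot.coe_lt_coe.2 (by linarith)
            have hmem : Set.Ioi ((↑(s-1):Rmax)) ∈ 𝓝 a := isOpen_Ioi.mem_nhds hlt
            refine Filter.eventually_of_mem hmem fun x hx => ?_
            have hxb : x ≠ ⊥ := fun h => by
              subst h; exact not_lt_bot (Set.mem_Ioi.1 hx)
            obtain ⟨t, ht⟩ := Option.ne_none_iff_exists'.mp hxb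
            rw [ht]
            exact_mod_cast WithBot.bot_lt_coe (t + r)
        | coe u =>
            have h2 : (↑(u - r) : Rmax) < a := (coe_lt_add_coe_iff a r u).1 hb
            have : Set.Ioi ((↑(u-r):Rmax)) ∈ 𝓝 a := isOpen_Ioi.mem_nhds h2
            exact Filter.eventually_of_mem this fun x hx => (coe_lt_add_coe_iff x r u).2 hx
      · intro b hb
        induction b using WithBot.recBotCoe with
        | bot => exact absurd hb not_lt_bot
        | coe u =>
            have h1 : a < (↑(u - r) : Rmax) := (add_coe_lt_coe_iff a r u).1 hb
            have : Set.Iio ((↑(u-r):Rmax)) ∈ 𝓝 a := isOpen_Iio.mem_nhds h1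
            exact Filter.eventually_of_mem this fun x hx => (add_coe_lt_coe_iff x r u).2 hx

end MaxPlus
end
end Helpers2
section Helpers3
open Filter Topology
noncomputable section
namespace MaxPlus

variable {n m q : ℕ}

lemma continuous_const_add (c : Rmax) : Continuous (fun a : Rmax => c + a) := by
  have : (fun a : Rmax => c + a) = fun a : Rmax => a + c := funext fun a => add_comm c a
  rw [this]; exact continuous_add_const c

lemma continuous_finsetSup {α : Type*} [TopologicalSpace α] {ι : Type*} (S : Finset ι)
    (f : ι → α → Rmax) (hf : ∀ i ∈ S, Continuous (f i)) :
    Continuous (fun x => S.sup (fun i => f i x)) := by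
  induction S using Finset.cons_induction with
  | empty => simpa using continuous_const (y := (⊥:Rmax))
  | cons j S hj ih =>
      simp only [Finset.sup_cons]
      exact (hf j (Finset.mem_cons_self _ _)).sup (ih fun i hi => hf i (Finset.mem_cons_of_mem hi))

lemma continuous_dot_right (z : Vec Rmax n) : Continuous fun w : Vec Rmax n => dotMP w z := by
  unfold dotMP
  exact continuous_finsetSup _ _ fun i _ =>
    (continuous_add_const (z i)).comp (continuous_apply i)

lemma continuous_dot_left (z : Vec Rmax n) : Continuous fun w : Vec Rmax n => dotMP z w := by
  have : (fun w : Vec Rmax n => dotMP z w) = fun w => dotMP w z := funext fun w => dot_comm z w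
  rw [this]; exact continuous_dot_right z

lemma continuous_mulVec (B : Matrix (Fin m) (Fin n) Rmax) :
    Continuous fun x : Vec Rmax n => mulVecMP B x := by
  apply continuous_pi
  intro i
  unfold mulVecMP
  exact continuous_finsetSup _ _ fun k _ =>
    (continuous_const_add (B i k)).comp (continuous_apply k)

lemma isClosed_orthS (K : Set (Vec Rmax n)) : IsClosed (orthS K) := by
  have : orthS K = ⋂ z ∈ K, {p : Vec Rmax n × Vec Rmax n | dotMP p.1 z = dotMP p.2 z} := by
    ext p; simp [orthS]
  rw [this]
  exact isClosed_biInter fun z _ => isClosed_eq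
    ((continuous_dot_right z).comp continuous_fst)
    ((continuous_dot_right z).comp continuous_snd)

lemma isClosed_orthC (W : Set (Vec Rmax n × Vec Rmax n)) : IsClosed (orthC W) := by
  have : orthC W = ⋂ p ∈ W, {z : Vec Rmax n | dotMP p.1 z = dotMP p.2 z} := by
    ext z; simp [orthC]
  rw [this]
  exact isClosed_biInter fun p _ => isClosed_eq
    (continuous_dot_left p.1) (continuous_dot_left p.2)

lemma isClosed_kerM {p : ℕ} (E : Matrix (Fin p) (Fin n) Rmax) : IsClosed (kerM E) :=
  isClosed_eq ((continuous_mulVec E).comp continuous_fst)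
    ((continuous_mulVec E).comp continuous_snd)

/-- the interval `[⊥, M]` of `Rmax` is compact -/
lemma isCompact_Icc_bot (M : ℝ) : IsCompact (Set.Icc (⊥:Rmax) ↑M) := by
  set g : ℝ → Rmax := fun x => if x ≤ 0 then ⊥ else ↑(Real.log x) with hg
  have hcont : ContinuousOn g (Set.Icc 0 (Real.exp M)) := by
    intro x hx
    rcases eq_or_lt_of_le hx.1 with h0 | hpos
    · -- x = 0
      have hx0 : x = 0 := h0.symm
      subst hx0
      have hg0 : g 0 = ⊥ := by simp [hg]
      rw [ContinuousWithinAt, hg0, tendsto_order]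
      refine ⟨fun b hb => absurd hb not_lt_bot, fun b hb => ?_⟩
      induction b using WithBot.recBotCoe with
      | bot => exact absurd hb (lt_irrefl _)
      | coe r =>
          have hmem : Set.Iio (Real.exp r) ∈ 𝓝[Set.Icc 0 (Real.exp M)] (0:ℝ) :=
            Filter.mem_of_superset (nhdsWithin_le_nhds (isOpen_Iio.mem_nhds (Real.exp_pos r)))
              (fun y hy => hy)
          refine Filter.eventually_of_mem hmem fun y hy => ?_
          by_cases hyle : y ≤ 0
          · simp [hg, hyle, WithBot.bot_lt_coe]
          · push_neg at hyle
            simp only [hg, if_neg (not_le.2 hyle)]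
            exact WithBot.coe_lt_coe.2 ((Real.log_lt_iff_lt_exp hyle).2 (by
              calc y < Real.exp r := hy
              ))
    · -- x > 0
      apply ContinuousAt.continuousWithinAt
      have hev : ∀ᶠ y in 𝓝 x, g y = (fun y => (↑(Real.log y) : Rmax)) y := by
        refine Filter.eventually_of_mem (isOpen_Ioi.mem_nhds hpos) fun y hy => ?_
        simp [hg, not_le.2 (Set.mem_Ioi.1 hy)]
      have hc : ContinuousAt (fun y => (↑(Real.log y) : Rmax)) x :=
        tendsto_coe_Rmax (Real.continuousAt_log (ne_of_gt hpos))
      have hgx : g x = (↑(Real.log x) : Rmax) := by simp [hg, not_le.2 hpos]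
      rw [ContinuousAt] at hc ⊢
      rw [hgx]
      exact hc.congr' (hev.mono fun y hy => hy.symm)
  have himg : g '' (Set.Icc 0 (Real.exp M)) = Set.Icc (⊥:Rmax) ↑M := by
    ext a
    constructor
    · rintro ⟨y, hy, rfl⟩
      refine ⟨bot_le, ?_⟩
      by_cases hyle : y ≤ 0
      · simp [hg, hyle]
      · push_neg at hyle
        simp only [hg, if_neg (not_le.2 hyle)]
        exact WithBot.coe_le_coe.2 ((Real.log_le_iff_le_exp hyle).2 hy.2)
    · rintro ⟨-, ha⟩
      induction a using WithBot.recBotCoe with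
      | bot =>
          exact ⟨0, ⟨le_refl 0, (Real.exp_pos M).le⟩, by simp [hg]⟩
      | coe r =>
          refine ⟨Real.exp r, ⟨(Real.exp_pos r).le, Real.exp_le_exp.2 (WithBot.coe_le_coe.1 ha)⟩, ?_⟩
          simp [hg, not_le.2 (Real.exp_pos r), Real.log_exp]
  rw [← himg]
  exact isCompact_Icc.image_of_continuousOn hcont

lemma isCompact_box (b : Fin n → ℝ) : IsCompact {x : Vec Rmax n | ∀ i, x i ≤ ↑(b i)} := by
  have : {x : Vec Rmax n | ∀ i, x i ≤ ↑(b i)} =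
      Set.pi Set.univ (fun i => Set.Icc (⊥:Rmax) ↑(b i)) := by
    ext x; simp [Set.mem_pi, Set.mem_Icc, Pi.le_def]
  rw [this]
  exact isCompact_univ_pi fun i => isCompact_Icc_bot (b i)

/-- every `Rmax` vector is bounded above by a real constant vector -/
lemma exists_coe_bound (v : Vec Rmax n) : ∃ B : ℝ, ∀ i, v i ≤ ↑B := by
  obtain ⟨B, hB⟩ := Finite.exists_le (fun i => WithBot.unbotD 0 (v i))
  refine ⟨B, fun i => ?_⟩
  calc v i ≤ ↑(WithBot.unbotD 0 (v i)) := by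
        induction (v i) using WithBot.recBotCoe with
        | bot => exact bot_le
        | coe r => simp
    _ ≤ ↑B := WithBot.coe_le_coe.2 (hB i)

/-- scaling any vector below a full-support vector -/
lemma exists_coe_bound_rel (v τ : Vec Rmax n) (hτ : ∀ i, ∃ r : ℝ, τ i = ↑r) :
    ∃ K : ℝ, ∀ i, v i ≤ ↑K + τ i := by
  choose τr hτr using hτ
  obtain ⟨B, hB⟩ := exists_coe_bound (fun i => v i + ↑(-(τr i)))
  refine ⟨B, fun i => ?_⟩
  have h := hB i
  rw [hτr i]
  rcases hvi : v i with _ | s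
  · exact bot_le
  · rw [hvi] at h
    have h2 : ((s:ℝ):Rmax) + ↑(-τr i) ≤ ↑B := h
    have h' : s + (-(τr i)) ≤ B := by exact_mod_cast h2
    have : ((s:Rmax)) ≤ ↑(B + τr i) := WithBot.coe_le_coe.2 (by linarith)
    rw [WithBot.coe_add] at this
    exact this
end MaxPlus
end
end Helpers3
section Helpers4
open Filter Topology
noncomputable section
namespace MaxPlus

variable {n : ℕ}

lemma prod_sup_mk (a₁ a₂ b₁ b₂ : Vec Rmax n) :
    ((a₁, a₂) : Vec Rmax n × Vec Rmax n) ⊔ (b₁, b₂) = (a₁ ⊔ b₁, a₂ ⊔ b₂) := rfl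

lemma smP_mk (a : Rmax) (p₁ p₂ : Vec Rmax n) : smP a (p₁, p₂) = (sm a p₁, sm a p₂) := rfl

/-- The scale set used to build orthogonal vectors to a congruence. -/
def Lam (W : Set (Vec Rmax n × Vec Rmax n)) (c : Vec Rmax n) (w : Vec Rmax n) : Set ℝ :=
  {l : ℝ | (w ⊔ sm ↑l c, sm ↑l c) ∈ W}

variable {W : Set (Vec Rmax n × Vec Rmax n)} {c : Vec Rmax n}

lemma sm_coe_mono {l l' : ℝ} (h : l ≤ l') (c : Vec Rmax n) :
    sm (↑l : Rmax) c ⊔ sm ↑l' c = sm ↑l' c := by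
  funext i
  exact sup_eq_right.2 (add_le_add_left (WithBot.coe_le_coe.2 h) (c i))

lemma lam_upset (hW : IsCongruence W) {w : Vec Rmax n} {l l' : ℝ}
    (hl : l ∈ Lam W c w) (hll : l ≤ l') : l' ∈ Lam W c w := by
  have hrefl : ((sm (↑l' : Rmax) c, sm ↑l' c) : _ × _) ∈ W := hW.1.refl _
  have := congJoin hW hl hrefl
  rw [prod_sup_mk] at this
  have e1 : (w ⊔ sm ↑l c) ⊔ sm ↑l' c = w ⊔ sm ↑l' c := by
    rw [sup_assoc, sm_coe_mono hll]
  have e2 : sm (↑l:Rmax) c ⊔ sm ↑l' c = sm ↑l' c := sm_coe_mono hll c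
  rw [e1, e2] at this
  exact this

lemma lam_nonempty (hW : IsCongruence W) (hc : ∀ i, ∃ r : ℝ, c i = ↑r) (w : Vec Rmax n) :
    (Lam W c w).Nonempty := by
  obtain ⟨K, hK⟩ := exists_coe_bound_rel w c hc
  refine ⟨K, ?_⟩
  have : w ⊔ sm ↑K c = sm ↑K c := sup_eq_right.2 fun i => hK i
  show (w ⊔ sm ↑K c, sm ↑K c) ∈ W
  rw [this]
  exact hW.1.refl _

lemma lam_mono (hW : IsCongruence W) {w w' : Vec Rmax n} (h : w ≤ w') :
    Lam W c w' ⊆ Lam W c w := by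
  intro l hl
  set L := sm (↑l : Rmax) c with hL
  have h1 : (w' ⊔ L, L) ∈ W := hl
  have hrefl : ((w ⊔ L, w ⊔ L) : _ × _) ∈ W := hW.1.refl _
  have h2 := congJoin hW h1 hrefl
  rw [prod_sup_mk] at h2
  have e1 : (w' ⊔ L) ⊔ (w ⊔ L) = w' ⊔ L :=
    sup_eq_left.2 (sup_le_sup_right h L)
  have e2 : L ⊔ (w ⊔ L) = w ⊔ L := by
    rw [sup_comm w L, ← sup_assoc, sup_idem]
  rw [e1, e2] at h2
  exact hW.1.trans (hW.1.symm h2) h1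

lemma lam_class (hW : IsCongruence W) {a b : Vec Rmax n} (hab : (a, b) ∈ W) :
    Lam W c b ⊆ Lam W c a := by
  intro l hl
  set L := sm (↑l : Rmax) c with hL
  have hrefl : ((L, L) : _ × _) ∈ W := hW.1.refl _
  have h2 := congJoin hW hab hrefl
  rw [prod_sup_mk] at h2
  exact hW.1.trans h2 hl

lemma lam_scale (hW : IsCongruence W) (r : ℝ) (v : Vec Rmax n) (l : ℝ) :
    l ∈ Lam W c (sm ↑r v) ↔ (l - r) ∈ Lam W c v := by
  constructor
  · intro hl
    have h := congScale hW hl (↑(-r) : Rmax)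
    rw [smP_mk, sm_sup, sm_coe_neg_cancel, sm_sm, ← WithBot.coe_add] at h
    have : -r + l = l - r := by ring
    rw [this] at h
    exact h
  · intro hl
    have h := congScale hW hl (↑r : Rmax)
    rw [smP_mk, sm_sup, sm_sm, ← WithBot.coe_add] at h
    have : r + (l - r) = l := by ring
    rw [this] at h
    exact h

open Classical in
/-- The candidate vector orthogonal to the congruence `W`. -/
def zvec (W : Set (Vec Rmax n × Vec Rmax n)) (c : Vec Rmax n) : Vec Rmax n := fun j =>
  if BddBelow (Lam W c (unit j)) then ↑(sInf (Lam W c (unit j))) else ⊥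

lemma zvec_le (j : Fin n) {l : ℝ} (hl : l ∈ Lam W c (unit j)) : zvec W c j ≤ ↑l := by
  unfold zvec
  by_cases h : BddBelow (Lam W c (unit j))
  · rw [if_pos h]; exact WithBot.coe_le_coe.2 (csInf_le h hl)
  · rw [if_neg h]; exact bot_le

lemma zvec_lt_mem (hW : IsCongruence W) (hc : ∀ i, ∃ r : ℝ, c i = ↑r) (j : Fin n) {u : ℝ}
    (hu : zvec W c j < ↑u) : u ∈ Lam W c (unit j) := by
  unfold zvec at hu
  by_cases h : BddBelow (Lam W c (unit j))
  · rw [if_pos h] at hu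
    have : sInf (Lam W c (unit j)) < u := WithBot.coe_lt_coe.1 hu
    obtain ⟨l, hl, hlu⟩ := exists_lt_of_csInf_lt (lam_nonempty hW hc _) this
    exact lam_upset hW hl hlu.le
  · obtain ⟨l, hl, hlu⟩ := not_bddBelow_iff.1 h u
    exact lam_upset hW hl hlu.le

lemma sm_unit_le {w : Vec Rmax n} {j : Fin n} {s : ℝ} (hwj : w j = ↑s) :
    sm (↑s : Rmax) (unit j) ≤ w := by
  intro i
  by_cases h : i = j
  · subst h; simp [sm_apply, unit, hwj]
  · simp [sm_apply, unit, h]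

/-- KEY1 : the linear form given by `zvec` is a lower bound of `Lam`. -/
lemma dot_zvec_le (hW : IsCongruence W) (w : Vec Rmax n) {l : ℝ} (hl : l ∈ Lam W c w) :
    dotMP w (zvec W c) ≤ ↑l := by
  rw [dot_le_iff]
  intro j
  rcases bot_or_coe (w j) with hwj | ⟨s, hwj⟩
  · rw [hwj, WithBot.bot_add]; exact bot_le
  · rw [hwj]
    have h1 : l ∈ Lam W c (sm ↑s (unit j)) := lam_mono hW (sm_unit_le hwj) hl
    have h2 : l - s ∈ Lam W c (unit j) := (lam_scale hW s (unit j) l).1 h1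
    have h3 : zvec W c j ≤ ↑(l - s) := zvec_le j h2
    calc (↑s : Rmax) + zvec W c j ≤ ↑s + ↑(l - s) := add_le_add_right h3 _
      _ = ↑l := by rw [← WithBot.coe_add]; norm_num

/-- KEY2 : any real strictly above the form value is in `Lam`. -/
lemma mem_lam_of_dot_lt (hW : IsCongruence W) (hc : ∀ i, ∃ r : ℝ, c i = ↑r)
    (w : Vec Rmax n) {u : ℝ} (hu : dotMP w (zvec W c) < ↑u) : u ∈ Lam W c w := by
  classical
  have main : ∀ S : Finset (Fin n),
      (((fun i => if i ∈ S then w i else ⊥) ⊔ sm ↑u c, sm ↑u c) : _ × _) ∈ W := by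
    intro S
    induction S using Finset.cons_induction with
    | empty =>
        have e : ((fun i => if i ∈ (∅ : Finset (Fin n)) then w i else ⊥) : Vec Rmax n)
            ⊔ sm ↑u c = sm ↑u c := by
          funext i; simp
        rw [e]; exact hW.1.refl _
    | cons j S hj ih =>
        have pairj : ((sm (w j) (unit j) ⊔ sm ↑u c, sm ↑u c) : _ × _) ∈ W := by
          rcases bot_or_coe (w j) with hwj | ⟨s, hwj⟩
          · rw [hwj, sm_bot]
            have e : botv n ⊔ sm (↑u:Rmax) c = sm ↑u c := by
              funext i; simp [botv]
            rw [e]; exact hW.1.refl _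
          · have h1 : (↑s:Rmax) + zvec W c j < ↑u := by
              calc (↑s:Rmax) + zvec W c j = w j + zvec W c j := by rw [hwj]
                _ ≤ dotMP w (zvec W c) := le_dot w _ j
                _ < ↑u := hu
            have h2 : zvec W c j < ↑(u - s) := by
              rw [add_comm] at h1
              exact (add_coe_lt_coe_iff _ s u).1 h1
            have h3 : u - s ∈ Lam W c (unit j) := zvec_lt_mem hW hc j h2
            have h4 : u ∈ Lam W c (sm ↑s (unit j)) := (lam_scale hW s (unit j) u).2 h3
            rw [hwj]; exact h4
        have := congJoin hW ih pairj
        rw [prod_sup_mk, sup_idem] at this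
        have e : ((fun i => if i ∈ S then w i else ⊥) ⊔ sm ↑u c)
              ⊔ (sm (w j) (unit j) ⊔ sm ↑u c)
            = (fun i => if i ∈ Finset.cons j S hj then w i else ⊥) ⊔ sm ↑u c := by
          rw [sup_sup_sup_comm, sup_idem]
          congr 1
          funext i
          rw [Pi.sup_apply]
          by_cases hiS : i ∈ S
          · have hij : i ≠ j := fun h => hj (h ▸ hiS)
            simp [hiS, hij, sm_apply, unit, Finset.mem_cons]
          · by_cases hij : i = j
            · subst hij
              simp [hiS, sm_apply, unit, Finset.mem_cons, add_zero]
            · simp [hiS, hij, sm_apply, unit, Finset.mem_cons]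
        rw [e] at this
        exact this
    
  have := main Finset.univ
  have e : ((fun i => if i ∈ (Finset.univ : Finset (Fin n)) then w i else ⊥) : Vec Rmax n) = w := by
    funext i; simp
  rw [e] at this
  exact this

lemma orth_le (hW : IsCongruence W) (hc : ∀ i, ∃ r : ℝ, c i = ↑r)
    {a b : Vec Rmax n} (hab : (a, b) ∈ W) :
    dotMP b (zvec W c) ≤ dotMP a (zvec W c) := by
  by_contra hlt
  push_neg at hlt
  obtain ⟨v, hv1, hv2⟩ := exists_between hlt
  have hvne : v ≠ ⊥ := fun h => by subst h; exact not_lt_bot hv1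
  obtain ⟨u, hu⟩ := Option.ne_none_iff_exists'.mp hvne
  subst hu
  have h1 : u ∈ Lam W c a := mem_lam_of_dot_lt hW hc a hv1
  have h2 : u ∈ Lam W c b := lam_class hW (hW.1.symm hab) h1
  exact absurd (dot_zvec_le hW b h2) (not_le.2 hv2)

lemma zvec_mem_orthC (hW : IsCongruence W) (hc : ∀ i, ∃ r : ℝ, c i = ↑r) :
    zvec W c ∈ orthC W := by
  rintro ⟨a, b⟩ hab
  exact le_antisymm (orth_le hW hc (hW.1.symm hab)) (orth_le hW hc hab)

end MaxPlus
end
end Helpers4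
section Helpers5
open Filter Topology
noncomputable section
namespace MaxPlus

variable {n : ℕ} {W : Set (Vec Rmax n × Vec Rmax n)}

lemma coe_max' (a b : ℝ) : ((max a b : ℝ) : Rmax) = ↑a ⊔ ↑b := WithBot.coe_max a b

lemma tendsto_sup_coe_seq (a : Rmax) {f : ℕ → ℝ} {r : ℝ} (hf : Tendsto f atTop (𝓝 r)) :
    Tendsto (fun k => a ⊔ ((f k : ℝ) : Rmax)) atTop (𝓝 (a ⊔ ↑r)) := by
  rcases bot_or_coe a with ha | ⟨s, ha⟩
  · subst ha
    simpa [bot_sup_eq] using tendsto_coe_Rmax hf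
  · subst ha
    have e : (fun k => ((s:ℝ):Rmax) ⊔ ↑(f k)) = fun k => ((max s (f k) : ℝ) : Rmax) :=
      funext fun k => (coe_max' s (f k)).symm
    rw [e, ← coe_max' s r]
    exact tendsto_coe_Rmax (tendsto_const_nhds.max hf)

lemma tendsto_neg_natCast : Tendsto (fun M : ℕ => -(M:ℝ)) atTop atBot :=
  tendsto_neg_atTop_atBot.comp tendsto_natCast_atTop_atTop

lemma tendsto_sup_neg (a : Rmax) :
    Tendsto (fun M : ℕ => a ⊔ ((-(M:ℝ) : ℝ) : Rmax)) atTop (𝓝 a) := by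
  rcases bot_or_coe a with ha | ⟨s, ha⟩
  · subst ha
    simpa [bot_sup_eq] using tendsto_bot_Rmax tendsto_neg_natCast
  · subst ha
    have e : (fun M : ℕ => ((s:ℝ):Rmax) ⊔ ↑(-(M:ℝ))) =
        fun M : ℕ => ((max s (-(M:ℝ)) : ℝ) : Rmax) :=
      funext fun (M : ℕ) => (coe_max' s (-(M:ℝ))).symm
    rw [e]
    apply Tendsto.congr' _ (tendsto_const_nhds (x := ((s:ℝ):Rmax)))
    have hev : ∀ᶠ M : ℕ in atTop, -s ≤ (M:ℝ) :=
      tendsto_natCast_atTop_atTop.eventually_ge_atTop (-s)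
    exact hev.mono fun M hM => by
      have h2 : max s (-(M:ℝ)) = s := max_eq_left (by linarith)
      show ((s:ℝ):Rmax) = ((max s (-(M:ℝ)) : ℝ) : Rmax)
      rw [h2]

/-- Separation of a pair `(x,y)` with `y ≤ x` from a closed congruence. -/
lemma sep_core (hW : IsCongruence W) (hWc : IsClosed W) {x y : Vec Rmax n} (hyx : y ≤ x)
    (hxy : (x, y) ∉ W) : ∃ z ∈ orthC W, dotMP x z ≠ dotMP y z := by
  by_contra hcon
  push_neg at hcon
  set cM : ℕ → Vec Rmax n := fun M i => y i ⊔ ↑(-(M : ℝ)) with hcMdef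
  have hfull : ∀ M i, ∃ r : ℝ, cM M i = ↑r := by
    intro M i
    rcases bot_or_coe (y i) with h | ⟨s, h⟩
    · exact ⟨-(M:ℝ), by rw [hcMdef]; simp [h]⟩
    · exact ⟨max s (-(M:ℝ)), by rw [hcMdef]; simp only [h]; rw [coe_max']⟩
  have hylecM : ∀ M, y ≤ cM M := fun M i => le_sup_left
  -- Step 1 : for every M, the pair (x ⊔ cM, cM) is in W
  have step1 : ∀ M : ℕ, (x ⊔ cM M, cM M) ∈ W := by
    intro M
    set z := zvec W (cM M) with hz
    have hzorth : z ∈ orthC W := zvec_mem_orthC hW (hfull M)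
    have heq : dotMP x z = dotMP y z := hcon z hzorth
    have hy0 : (0:ℝ) ∈ Lam W (cM M) y := by
      show (y ⊔ sm ((0:ℝ):Rmax) (cM M), sm ((0:ℝ):Rmax) (cM M)) ∈ W
      have e0 : ((0:ℝ):Rmax) = (0:Rmax) := rfl
      rw [e0, sm_zero, sup_eq_right.2 (hylecM M)]
      exact hW.1.refl _
    have hxle : dotMP x z ≤ ↑(0:ℝ) := heq ▸ dot_zvec_le hW y hy0
    have hmem : ∀ k : ℕ, (x ⊔ sm ↑(1/((k:ℝ)+1)) (cM M), sm ↑(1/((k:ℝ)+1)) (cM M)) ∈ W := by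
      intro k
      have hpos : (0:ℝ) < 1/((k:ℝ)+1) := by positivity
      exact mem_lam_of_dot_lt hW (hfull M) x
        (lt_of_le_of_lt hxle (WithBot.coe_lt_coe.2 hpos))
    have hseq : Tendsto (fun k : ℕ => 1/((k:ℝ)+1)) atTop (𝓝 0) :=
      tendsto_one_div_add_atTop_nhds_zero_nat
    have hsnd : Tendsto (fun k : ℕ => sm (↑(1/((k:ℝ)+1)) : Rmax) (cM M)) atTop (𝓝 (cM M)) := by
      rw [tendsto_pi_nhds]
      intro i
      obtain ⟨r, hr⟩ := hfull M i
      have e : (fun k : ℕ => sm (↑(1/((k:ℝ)+1)) : Rmax) (cM M) i)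
          = fun k : ℕ => ((1/((k:ℝ)+1) + r : ℝ) : Rmax) :=
        funext fun k => by rw [sm_apply, hr, ← WithBot.coe_add]
      rw [e, hr]
      have : Tendsto (fun k : ℕ => 1/((k:ℝ)+1) + r) atTop (𝓝 r) := by
        simpa using hseq.add (tendsto_const_nhds (x := r))
      exact tendsto_coe_Rmax this
    have hfst : Tendsto (fun k : ℕ => x ⊔ sm (↑(1/((k:ℝ)+1)) : Rmax) (cM M)) atTop
        (𝓝 (x ⊔ cM M)) := by
      rw [tendsto_pi_nhds]
      intro i
      obtain ⟨r, hr⟩ := hfull M i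
      have e : (fun k : ℕ => (x ⊔ sm (↑(1/((k:ℝ)+1)) : Rmax) (cM M)) i)
          = fun k : ℕ => x i ⊔ ((1/((k:ℝ)+1) + r : ℝ) : Rmax) :=
        funext fun k => by rw [Pi.sup_apply, sm_apply, hr, ← WithBot.coe_add]
      have e2 : (x ⊔ cM M) i = x i ⊔ ↑r := by rw [Pi.sup_apply, hr]
      rw [e, e2]
      have : Tendsto (fun k : ℕ => 1/((k:ℝ)+1) + r) atTop (𝓝 r) := by
        simpa using hseq.add (tendsto_const_nhds (x := r))
      exact tendsto_sup_coe_seq (x i) this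
    exact hWc.mem_of_tendsto (hfst.prodMk_nhds hsnd) (Eventually.of_forall hmem)
  -- Step 2 : limit M → ∞ gives (x,y) ∈ W
  have hsup : ∀ M, x ⊔ cM M = fun i => x i ⊔ ↑(-(M:ℝ)) := by
    intro M
    funext i
    rw [Pi.sup_apply, hcMdef]
    show x i ⊔ (y i ⊔ _) = _
    rw [← sup_assoc, sup_eq_left.2 (hyx i)]
  have hfst2 : Tendsto (fun M : ℕ => x ⊔ cM M) atTop (𝓝 x) := by
    rw [tendsto_pi_nhds]
    intro i
    have e : (fun M : ℕ => (x ⊔ cM M) i) = fun M : ℕ => x i ⊔ ((-(M:ℝ) : ℝ) : Rmax) :=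
      funext fun M => by rw [hsup M]
    rw [e]
    exact tendsto_sup_neg (x i)
  have hsnd2 : Tendsto (fun M : ℕ => cM M) atTop (𝓝 y) := by
    rw [tendsto_pi_nhds]
    intro i
    exact tendsto_sup_neg (y i)
  exact hxy (hWc.mem_of_tendsto (hfst2.prodMk_nhds hsnd2) (Eventually.of_forall step1))

/-- Biduality : a closed congruence contains the orthogonal of its orthogonal. -/
lemma orthS_orthC_subset (hW : IsCongruence W) (hWc : IsClosed W) :
    orthS (orthC W) ⊆ W := by
  rintro ⟨x, y⟩ h
  by_contra hxy
  have hcases : ((x ⊔ y, y) ∉ W) ∨ ((x ⊔ y, x) ∉ W) := by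
    by_contra hb
    push_neg at hb
    exact hxy (hW.1.trans (hW.1.symm hb.2) hb.1)
  rcases hcases with hc | hc
  · obtain ⟨z, hz, hne⟩ := sep_core hW hWc le_sup_right hc
    apply hne
    rw [dot_sup_left, h z hz, sup_idem]
  · obtain ⟨z, hz, hne⟩ := sep_core hW hWc le_sup_left hc
    apply hne
    rw [dot_sup_left, h z hz, sup_idem]

end MaxPlus
end
end Helpers5
section Helpers6
open Filter Topology
noncomputable section
namespace MaxPlus

variable {n : ℕ} {X : Set (Vec Rmax n)}

/-- Separation of a point from a closed semimodule by an orthogonal pair. -/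
lemma sep_semimodule (hX : IsSemimodule X) (hXc : IsClosed X) (hbot : botv n ∈ X)
    {t : Vec Rmax n} (ht : t ∉ X) :
    ∃ a b : Vec Rmax n, (∀ v ∈ X, dotMP a v = dotMP b v) ∧ dotMP a t ≠ dotMP b t := by
  classical
  by_cases hcase : ∃ i₀, t i₀ ≠ ⊥ ∧ ∀ v ∈ X, v i₀ = ⊥
  · obtain ⟨i₀, hti, hvi⟩ := hcase
    refine ⟨unit i₀, botv n, fun v hv => ?_, ?_⟩
    · rw [dot_unit, dot_botv, hvi v hv]
    · rw [dot_unit, dot_botv]; exact hti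
  · push_neg at hcase
    -- every coordinate in the support of t is in the support of X
    set τ : ℕ → Vec Rmax n := fun M i => t i ⊔ ↑(-(M : ℝ)) with hτdef
    have hτfull : ∀ M i, ∃ r : ℝ, τ M i = ↑r := by
      intro M i
      rcases bot_or_coe (t i) with h | ⟨s, h⟩
      · exact ⟨-(M:ℝ), by rw [hτdef]; simp [h]⟩
      · exact ⟨max s (-(M:ℝ)), by rw [hτdef]; simp only [h]; rw [coe_max']⟩
    choose τr hτr using hτfull
    have htleτ : ∀ M, t ≤ τ M := fun M i => le_sup_left
    set R : ℕ → Fin n → Set ℝ := fun M i => {r | ∃ v, v ∈ X ∧ v ≤ τ M ∧ v i = ↑r} with hRdef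
    have hRub : ∀ M i, ∀ r ∈ R M i, r ≤ τr M i := by
      rintro M i r ⟨v, -, hvle, hvi⟩
      have := hvle i
      rw [hvi, hτr M i] at this
      exact WithBot.coe_le_coe.1 this
    have hRbdd : ∀ M i, BddAbove (R M i) := fun M i => ⟨τr M i, fun r hr => hRub M i r hr⟩
    set aM : ℕ → Vec Rmax n := fun M i => ↑(-(τr M i)) with haMdef
    set bM : ℕ → Vec Rmax n := fun M i =>
      if (R M i).Nonempty then ↑(-(sSup (R M i))) else ↑(-(τr M i)) with hbMdef
    have hab : ∀ M, aM M ≤ bM M := by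
      intro M i
      simp only [haMdef, hbMdef]
      by_cases h : (R M i).Nonempty
      · rw [if_pos h]
        exact WithBot.coe_le_coe.2 (neg_le_neg (csSup_le h (hRub M i)))
      · rw [if_neg h]
    -- the two linear forms agree on X
    have heqX : ∀ M, ∀ v ∈ X, dotMP v (aM M) = dotMP v (bM M) := by
      intro M v hv
      by_cases hvbot : v = botv n
      · subst hvbot; rw [dot_botv, dot_botv]
      · have hex : ∃ i₁, v i₁ ≠ ⊥ := by
          by_contra hno
          push_neg at hno
          exact hvbot (funext fun i => hno i)
        obtain ⟨i₁, hvi₁⟩ := hex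
        obtain ⟨s₁, hs₁⟩ := (bot_or_coe (v i₁)).resolve_left hvi₁
        have hlne : dotMP v (aM M) ≠ ⊥ := by
          intro hb
          have := le_dot v (aM M) i₁
          rw [hb] at this
          simp only [hb, hs₁, haMdef] at this
          rw [← WithBot.coe_add] at this
          exact absurd this (by simp)
        obtain ⟨lr, hlr⟩ := (bot_or_coe (dotMP v (aM M))).resolve_left hlne
        have hvle : ∀ i, v i ≤ ↑(lr + τr M i) := by
          intro i
          have h1 : v i + aM M i ≤ ↑lr := hlr ▸ le_dot v (aM M) i
          rcases bot_or_coe (v i) with h | ⟨si, h⟩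
          · rw [h]; exact bot_le
          · simp only [h, haMdef] at h1
            rw [← WithBot.coe_add] at h1
            rw [h]
            exact WithBot.coe_le_coe.2 (by
              have := WithBot.coe_le_coe.1 h1; linarith)
        have hv' : sm ↑(-lr) v ∈ X := smScale hX hv _
        have hv'le : sm (↑(-lr):Rmax) v ≤ τ M := by
          intro i
          rw [sm_apply, hτr M i]
          calc (↑(-lr):Rmax) + v i ≤ ↑(-lr) + ↑(lr + τr M i) := add_le_add_right (hvle i) _
            _ = ↑(τr M i) := by rw [← WithBot.coe_add]; norm_num
        -- dot v bM ≤ lr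
        have hle1 : dotMP v (bM M) ≤ ↑lr := by
          rw [dot_le_iff]
          intro i
          rcases bot_or_coe (v i) with h | ⟨si, h⟩
          · rw [h, WithBot.bot_add]; exact bot_le
          · have hmem : si - lr ∈ R M i :=
              ⟨sm ↑(-lr) v, hv', hv'le, by rw [sm_apply, h, ← WithBot.coe_add]; ring_nf⟩
            have hne : (R M i).Nonempty := ⟨si - lr, hmem⟩
            have hsup : si - lr ≤ sSup (R M i) := le_csSup (hRbdd M i) hmem
            simp only [h, hbMdef, if_pos hne]
            rw [← WithBot.coe_add]
            exact WithBot.coe_le_coe.2 (by linarith)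
        have hge1 : dotMP v (aM M) ≤ dotMP v (bM M) := dot_mono_right v (hab M)
        exact le_antisymm hge1 (by rw [hlr]; exact hle1)
    -- separation at t, for some M
    by_contra hsep
    push_neg at hsep
    have hteq : ∀ M, dotMP t (aM M) = dotMP t (bM M) := by
      intro M
      have h1 : ∀ v ∈ X, dotMP (aM M) v = dotMP (bM M) v := by
        intro v hv
        rw [dot_comm, dot_comm (bM M) v]
        exact heqX M v hv
      have := hsep (aM M) (bM M) h1
      rw [dot_comm, dot_comm (bM M) t] at this
      exact this
    have htle : ∀ M, dotMP t (aM M) ≤ ↑(0:ℝ) := by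
      intro M
      rw [dot_le_iff]
      intro i
      rcases bot_or_coe (t i) with h | ⟨si, h⟩
      · rw [h, WithBot.bot_add]; exact bot_le
      · have h1 : t i ≤ τ M i := htleτ M i
        rw [h, hτr M i] at h1
        simp only [h, haMdef]
        rw [← WithBot.coe_add]
        exact WithBot.coe_le_coe.2 (by
          have := WithBot.coe_le_coe.1 h1; linarith)
    have htble : ∀ M, dotMP t (bM M) ≤ ↑(0:ℝ) := fun M => (hteq M) ▸ htle M
    -- every support coordinate of t has nonempty R
    have hRne : ∀ M i (si : ℝ), t i = ↑si → (R M i).Nonempty := by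
      intro M i si hsi
      obtain ⟨v, hv, hvi⟩ := hcase i (by rw [hsi]; exact WithBot.coe_ne_bot)
      obtain ⟨wv, hwv⟩ := (bot_or_coe (v i)).resolve_left hvi
      obtain ⟨K, hK⟩ := exists_coe_bound_rel v (τ M) (fun i => ⟨τr M i, hτr M i⟩)
      refine ⟨wv - K, sm ↑(-K) v, smScale hX hv _, ?_, ?_⟩
      · intro j
        rw [sm_apply]
        calc (↑(-K):Rmax) + v j ≤ ↑(-K) + (↑K + τ M j) := add_le_add_right (hK j) _
          _ = τ M j := by
              rw [← add_assoc, ← WithBot.coe_add]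
              norm_num
      · rw [sm_apply, hwv, ← WithBot.coe_add]
        congr 1
        ring
    have htsup : ∀ M i (si : ℝ), t i = ↑si → si ≤ sSup (R M i) := by
      intro M i si hsi
      have h1 : t i + bM M i ≤ ↑(0:ℝ) := le_trans (le_dot t (bM M) i) (htble M)
      simp only [hsi, hbMdef, if_pos (hRne M i si hsi)] at h1
      rw [← WithBot.coe_add] at h1
      have := WithBot.coe_le_coe.1 h1
      linarith
    -- witnesses approximating t from within X
    have wit : ∀ M i, ∃ v, v ∈ X ∧ v ≤ τ M ∧
        (∀ si : ℝ, t i = ↑si → ↑(si - 1/((M:ℝ)+1)) ≤ v i) := by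
      intro M i
      rcases bot_or_coe (t i) with h | ⟨si, h⟩
      · exact ⟨botv n, hbot, fun j => bot_le, fun si hsi => absurd (h ▸ hsi) (by simp)⟩
      · have hpos : (0:ℝ) < 1/((M:ℝ)+1) := by positivity
        have hlt : si - 1/((M:ℝ)+1) < sSup (R M i) :=
          lt_of_lt_of_le (by linarith) (htsup M i si h)
        obtain ⟨r, hr, hrlt⟩ := exists_lt_of_lt_csSup (hRne M i si h) hlt
        obtain ⟨v, hv, hvle, hvi⟩ := hr
        refine ⟨v, hv, hvle, fun si' hsi' => ?_⟩
        have : si' = si := by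
          rw [h] at hsi'
          exact (WithBot.coe_inj.1 hsi').symm
        rw [this, hvi]
        exact WithBot.coe_le_coe.2 hrlt.le
    choose w hw1 hw2 hw3 using wit
    set xM : ℕ → Vec Rmax n := fun M => Finset.univ.sup (w M) with hxMdef
    have hxMX : ∀ M, xM M ∈ X := fun M =>
      smFinsupMem hX hbot Finset.univ (w M) (fun i _ => hw1 M i)
    have hxMle : ∀ M, xM M ≤ τ M := fun M =>
      Finset.sup_le fun i _ => hw2 M i
    have htend : Tendsto xM atTop (𝓝 t) := by
      rw [tendsto_pi_nhds]
      intro i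
      rcases bot_or_coe (t i) with h | ⟨si, h⟩
      · -- squeeze between ⊥ and τ M i → t i = ⊥
        refine tendsto_of_tendsto_of_tendsto_of_le_of_le
          (g := fun _ : ℕ => (⊥:Rmax)) (h := fun M => τ M i)
          ?_ ?_ (fun M => bot_le) (fun M => hxMle M i)
        · rw [h]; exact tendsto_const_nhds
        · exact tendsto_sup_neg (t i)
      · refine tendsto_of_tendsto_of_tendsto_of_le_of_le
          (f := fun M => xM M i)
          (g := fun M : ℕ => ((si - 1/((M:ℝ)+1) : ℝ) : Rmax)) (h := fun M => τ M i)
          ?_ ?_ ?_ (fun M => hxMle M i)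
        · rw [h]
          apply tendsto_coe_Rmax
          have h1 : Tendsto (fun M : ℕ => 1/((M:ℝ)+1)) atTop (𝓝 0) :=
            tendsto_one_div_add_atTop_nhds_zero_nat
          simpa using (tendsto_const_nhds (x := si)).sub h1
        · exact tendsto_sup_neg (t i)
        · intro M
          calc ((si - 1/((M:ℝ)+1) : ℝ) : Rmax) ≤ w M i i := hw3 M i si h
            _ ≤ xM M i := by
                have := Finset.le_sup (f := w M) (Finset.mem_univ i)
                exact this i
    exact ht (hXc.mem_of_tendsto htend (Eventually.of_forall hxMX))

end MaxPlus
end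
end Helpers6
section Helpers7
open Filter Topology
noncomputable section
namespace MaxPlus

variable {n q : ℕ}

lemma isClosed_setSum_imM (X₁ : Set (Vec Rmax n)) (hX₁c : IsClosed X₁)
    (D : Matrix (Fin n) (Fin q) Rmax) : IsClosed (setSum X₁ (imM D)) := by
  classical
  set S := setSum X₁ (imM D) with hSdef
  rw [isClosed_iff_clusterPt]
  intro t hct
  set F := 𝓝 t ⊓ 𝓟 S with hFdef
  haveI hFne : F.NeBot := hct
  -- normalized decomposition of elements of S
  have hdec : ∀ x : Vec Rmax n, ∃ pr : Vec Rmax n × Vec Rmax q,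
      x ∈ S → pr.1 ∈ X₁ ∧ x = pr.1 ⊔ mulVecMP D pr.2 ∧
        ∀ j, (∀ i, D i j = ⊥) → pr.2 j = ⊥ := by
    intro x
    by_cases hx : x ∈ S
    · obtain ⟨w, hw, y, ⟨u₀, hy⟩, hxeq⟩ := hx
      set u : Vec Rmax q := fun j => if ∀ i, D i j = ⊥ then ⊥ else u₀ j with hudef
      refine ⟨(w, u), fun _ => ⟨hw, ?_, fun j hj => by simp [hudef, hj]⟩⟩
      have hDu : mulVecMP D u = mulVecMP D u₀ := by
        funext i
        rw [mulVec_apply, mulVec_apply]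
        refine Finset.sup_congr rfl fun j _ => ?_
        simp only [hudef]
        by_cases hcol : ∀ i', D i' j = ⊥
        · rw [if_pos hcol, hcol i, WithBot.bot_add, WithBot.bot_add]
        · rw [if_neg hcol]
      rw [hxeq, hy, hDu]
    · exact ⟨(botv n, botv q), fun hx' => absurd hx' hx⟩
  choose ψ hψ using hdec
  -- bounds
  obtain ⟨B, hB⟩ := exists_coe_bound t
  set U : Set (Vec Rmax n) := {x | ∀ i, x i < ↑(B+1)} with hUdef
  have hUopen : IsOpen U := by
    have : U = ⋂ i, (fun x : Vec Rmax n => x i) ⁻¹' (Set.Iio ↑(B+1)) := by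
      ext x; simp [hUdef]
    rw [this]
    exact isOpen_iInter_of_finite fun i => (isOpen_Iio).preimage (continuous_apply i)
  have htU : t ∈ U := fun i => lt_of_le_of_lt (hB i) (WithBot.coe_lt_coe.2 (by linarith))
  have hevSU : ∀ᶠ x in F, x ∈ S ∧ x ∈ U := by
    have h1 : ∀ᶠ x in F, x ∈ S := Filter.le_principal_iff.1 inf_le_right
    have h2 : ∀ᶠ x in F, x ∈ U :=
      Filter.Eventually.filter_mono inf_le_left
        (Filter.eventually_of_mem (hUopen.mem_nhds htU) fun x hx => hx)
    exact h1.and h2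
  -- per-column bounds on the normalized second component
  have hbnd : ∀ j : Fin q, ∃ bj : ℝ, ∀ x, x ∈ S → x ∈ U → (ψ x).2 j ≤ ↑bj := by
    intro j
    by_cases hcol : ∀ i, D i j = ⊥
    · exact ⟨0, fun x hxS _ => by rw [(hψ x hxS).2.2 j hcol]; exact bot_le⟩
    · push_neg at hcol
      obtain ⟨i, hi⟩ := hcol
      obtain ⟨r, hr⟩ := (bot_or_coe (D i j)).resolve_left hi
      refine ⟨B + 1 - r, fun x hxS hxU => ?_⟩
      have hxd : x = (ψ x).1 ⊔ mulVecMP D (ψ x).2 := (hψ x hxS).2.1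
      have hxi : x i = ((ψ x).1 ⊔ mulVecMP D (ψ x).2) i := congrFun hxd i
      have h1 : D i j + (ψ x).2 j ≤ x i := by
        rw [hxi, Pi.sup_apply]
        calc D i j + (ψ x).2 j ≤ mulVecMP D (ψ x).2 i := by
              rw [mulVec_apply]
              exact Finset.le_sup (f := fun k => D i k + (ψ x).2 k) (Finset.mem_univ j)
          _ ≤ _ := le_sup_right
      have h2 : D i j + (ψ x).2 j ≤ ↑(B+1) := le_trans h1 (hxU i).le
      rw [hr] at h2
      rcases bot_or_coe ((ψ x).2 j) with h | ⟨s, h⟩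
      · rw [h]; exact bot_le
      · rw [h, ← WithBot.coe_add] at h2
        rw [h]
        exact WithBot.coe_le_coe.2 (by
          have := WithBot.coe_le_coe.1 h2; linarith)
  choose bndu hbndu using hbnd
  -- the compact box
  set K : Set (Vec Rmax n × Vec Rmax q) :=
    {x : Vec Rmax n | ∀ i, x i ≤ ↑(B+1)} ×ˢ {u : Vec Rmax q | ∀ j, u j ≤ ↑(bndu j)} with hKdef
  have hKcomp : IsCompact K := (isCompact_box fun _ => B+1).prod (isCompact_box bndu)
  have hevK : ∀ᶠ x in F, ψ x ∈ K := by
    refine hevSU.mono fun x ⟨hxS, hxU⟩ => ⟨fun i => ?_, fun j => hbndu j x hxS hxU⟩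
    have hxi : x i = ((ψ x).1 ⊔ mulVecMP D (ψ x).2) i := congrFun ((hψ x hxS).2.1) i
    have h5 : (ψ x).1 i ≤ x i := by rw [hxi, Pi.sup_apply]; exact le_sup_left
    exact le_trans h5 (hxU i).le
  have hle : map ψ F ≤ 𝓟 K := Filter.le_principal_iff.2 (Filter.mem_map.mpr hevK)
  obtain ⟨p, hpK, hclp⟩ := hKcomp hle
  set G := F ⊓ comap ψ (𝓝 p) with hGdef
  haveI hGne : G.NeBot := by
    have h2 : (map ψ F ⊓ 𝓝 p).NeBot := by rw [inf_comm]; exact hclp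
    have h3 : (map ψ (F ⊓ comap ψ (𝓝 p))).NeBot := by rw [Filter.push_pull]; exact h2
    exact (Filter.map_neBot_iff ψ).1 h3
  have hψt : Tendsto ψ G (𝓝 p) := Filter.tendsto_iff_comap.2 inf_le_right
  have hGF : G ≤ F := inf_le_left
  have hidt : Tendsto (fun x : Vec Rmax n => x) G (𝓝 t) :=
    Filter.Tendsto.mono_left (Filter.tendsto_id'.2 inf_le_left) hGF
  have hevS : ∀ᶠ x in G, x ∈ S := (hevSU.filter_mono hGF).mono fun x hx => hx.1
  have hp1X : p.1 ∈ X₁ := by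
    have h1t : Tendsto (fun x => (ψ x).1) G (𝓝 p.1) := (continuous_fst.tendsto p).comp hψt
    exact hX₁c.mem_of_tendsto h1t (hevS.mono fun x hx => (hψ x hx).1)
  have hφcont : Continuous (fun pr : Vec Rmax n × Vec Rmax q => pr.1 ⊔ mulVecMP D pr.2) := by
    apply continuous_pi
    intro i
    have hc2 : Continuous (fun pr : Vec Rmax n × Vec Rmax q => mulVecMP D pr.2 i) := by
      show Continuous (fun pr : Vec Rmax n × Vec Rmax q =>
        Finset.univ.sup fun k => D i k + pr.2 k)
      exact (continuous_finsetSup Finset.univ (fun k (u : Vec Rmax q) => D i k + u k)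
        (fun k _ => (continuous_const_add (D i k)).comp (continuous_apply k))).comp
        continuous_snd
    have hc1 : Continuous (fun pr : Vec Rmax n × Vec Rmax q => pr.1 i) :=
      (continuous_apply i).comp continuous_fst
    exact hc1.sup hc2
  have hφt : Tendsto (fun x => (ψ x).1 ⊔ mulVecMP D (ψ x).2) G
      (𝓝 (p.1 ⊔ mulVecMP D p.2)) := (hφcont.tendsto p).comp hψt
  have heqev : (fun x => (ψ x).1 ⊔ mulVecMP D (ψ x).2) =ᶠ[G] (fun x : Vec Rmax n => x) :=
    hevS.mono fun x hx => ((hψ x hx).2.1).symm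
  have hidt2 : Tendsto (fun x : Vec Rmax n => x) G (𝓝 (p.1 ⊔ mulVecMP D p.2)) :=
    hφt.congr' heqev
  have hteq : t = p.1 ⊔ mulVecMP D p.2 := tendsto_nhds_unique hidt hidt2
  exact ⟨p.1, hp1X, mulVecMP D p.2, ⟨p.2, rfl⟩, hteq⟩

end MaxPlus
end
end Helpers7
section Helpers8
open Filter Topology
noncomputable section
namespace MaxPlus

variable {n m q : ℕ}

lemma dot_sup_right (x z z' : Vec Rmax n) : dotMP x (z ⊔ z') = dotMP x z ⊔ dotMP x z' := by
  rw [dot_comm, dot_sup_left, dot_comm z x, dot_comm z' x]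

lemma dot_sm_right (a : Rmax) (x z : Vec Rmax n) : dotMP x (sm a z) = a + dotMP x z := by
  rw [dot_comm, dot_sm_left, dot_comm z x]

lemma orthS_congruence (K : Set (Vec Rmax n)) : IsCongruence (orthS K) := by
  refine ⟨⟨fun x z hz => rfl, fun h z hz => (h z hz).symm,
    fun h1 h2 z hz => (h1 z hz).trans (h2 z hz)⟩, ?_⟩
  intro p hp p' hp' lam mu z hz
  show dotMP (sm lam p.1 ⊔ sm mu p'.1) z = dotMP (sm lam p.2 ⊔ sm mu p'.2) z
  rw [dot_sup_left, dot_sup_left, dot_sm_left, dot_sm_left, dot_sm_left, dot_sm_left,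
    hp z hz, hp' z hz]

lemma orthS_antitone {K K' : Set (Vec Rmax n)} (h : K ⊆ K') : orthS K' ⊆ orthS K :=
  fun p hp z hz => hp z (h hz)

lemma orthC_semimodule (W : Set (Vec Rmax n × Vec Rmax n)) : IsSemimodule (orthC W) := by
  intro z hz z' hz' lam mu p hp
  rw [dot_sup_right, dot_sup_right, dot_sm_right, dot_sm_right, dot_sm_right, dot_sm_right,
    hz p hp, hz' p hp]

lemma orthC_antitone {W W' : Set (Vec Rmax n × Vec Rmax n)} (h : W ⊆ W') :
    orthC W' ⊆ orthC W := fun z hz p hp => hz p (h hp)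

lemma subset_orthS_orthC (W : Set (Vec Rmax n × Vec Rmax n)) : W ⊆ orthS (orthC W) :=
  fun p hp z hz => hz p hp

lemma botv_mem_orthC (W : Set (Vec Rmax n × Vec Rmax n)) : botv n ∈ orthC W :=
  fun p _ => by rw [dot_bot_right, dot_bot_right]

lemma botv_mem_imM (D : Matrix (Fin n) (Fin q) Rmax) : botv n ∈ imM D :=
  ⟨botv q, (mulVec_botv D).symm⟩

lemma subset_setSum_left {X₁ : Set (Vec Rmax n)} (D : Matrix (Fin n) (Fin q) Rmax) :
    X₁ ⊆ setSum X₁ (imM D) := fun x hx =>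
  ⟨x, hx, botv n, botv_mem_imM D, by rw [botv_eq_bot, sup_bot_eq]⟩

lemma imM_subset_setSum {X₁ : Set (Vec Rmax n)} (hb : botv n ∈ X₁)
    (D : Matrix (Fin n) (Fin q) Rmax) : imM D ⊆ setSum X₁ (imM D) := fun y hy =>
  ⟨botv n, hb, y, hy, by rw [botv_eq_bot, bot_sup_eq]⟩

lemma setSum_semimodule {X₁ : Set (Vec Rmax n)} (hX₁ : IsSemimodule X₁)
    (D : Matrix (Fin n) (Fin q) Rmax) : IsSemimodule (setSum X₁ (imM D)) := by
  rintro x ⟨w, hw, -, ⟨u, rfl⟩, rfl⟩ x' ⟨w', hw', -, ⟨u', rfl⟩, rfl⟩ lam mu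
  refine ⟨sm lam w ⊔ sm mu w', hX₁ w hw w' hw' lam mu,
    mulVecMP D (sm lam u ⊔ sm mu u'), ⟨sm lam u ⊔ sm mu u', rfl⟩, ?_⟩
  rw [mulVec_sup, mulVec_sm, mulVec_sm, sm_sup, sm_sup, sup_sup_sup_comm]

lemma mulVec_as_dot (C : Matrix (Fin q) (Fin n) Rmax) (a : Vec Rmax n) (j : Fin q) :
    mulVecMP C a j = dotMP a (fun k => C j k) := by
  rw [mulVec_apply]
  exact Finset.sup_congr rfl fun k _ => add_comm _ _

/-- The key minimality lemma : `orthS Kstar` is contained in every closed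
conditioned invariant congruence containing `V`. -/
lemma main_minimality {n q : ℕ} (A : Matrix (Fin n) (Fin n) Rmax)
    (C : Matrix (Fin q) (Fin n) Rmax)
    (V : Set (Vec Rmax n × Vec Rmax n))
    (Kstar : Set (Vec Rmax n))
    (hK4 : ∀ X : Set (Vec Rmax n), IsSemimodule X →
      ContrInv A.transpose C.transpose X → X ⊆ orthC V → X ⊆ Kstar)
    (W : Set (Vec Rmax n × Vec Rmax n)) (hWcong : IsCongruence W) (hWclosed : IsClosed W)
    (hWcond : CondInv C A W) (hVW : V ⊆ W) : orthS Kstar ⊆ W := by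
  set X₁ : Set (Vec Rmax n) := orthC W with hX₁def
  have hX₁sem : IsSemimodule X₁ := orthC_semimodule W
  have hX₁V : X₁ ⊆ orthC V := orthC_antitone hVW
  have hX₁closed : IsClosed X₁ := isClosed_orthC W
  have hbotX₁ : botv n ∈ X₁ := botv_mem_orthC W
  have hX₁contr : ContrInv A.transpose C.transpose X₁ := by
    rintro ζ ⟨z, hz, rfl⟩
    show mulVecMP A.transpose z ∈ setSum X₁ (imM C.transpose)
    by_contra hnot
    have hSXc : IsClosed (setSum X₁ (imM C.transpose)) :=
      isClosed_setSum_imM X₁ hX₁closed C.transpose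
    have hSXs : IsSemimodule (setSum X₁ (imM C.transpose)) :=
      setSum_semimodule hX₁sem C.transpose
    have hSXb : botv n ∈ setSum X₁ (imM C.transpose) := subset_setSum_left _ hbotX₁
    obtain ⟨a, b, hab, hsep⟩ := sep_semimodule hSXs hSXc hSXb hnot
    have habW : (a, b) ∈ W := by
      apply orthS_orthC_subset hWcong hWclosed
      intro z' hz'
      exact hab z' (subset_setSum_left _ hz')
    have habker : (a, b) ∈ kerM C := by
      show mulVecMP C a = mulVecMP C b
      funext j
      have hmem : mulVecMP C.transpose (unit j) ∈ setSum X₁ (imM C.transpose) :=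
        imM_subset_setSum hbotX₁ _ ⟨unit j, rfl⟩
      have h1 := hab _ hmem
      rw [mulVec_unit] at h1
      rw [mulVec_as_dot, mulVec_as_dot]
      have e : (fun i => C.transpose i j) = fun k => C j k :=
        funext fun i => Matrix.transpose_apply C i j
      rw [e] at h1
      exact h1
    have hApair : (mulVecMP A a, mulVecMP A b) ∈ W :=
      hWcond ⟨(a, b), ⟨habW, habker⟩, rfl⟩
    have h2 := hz _ hApair
    rw [dot_mulVec, dot_mulVec] at h2
    exact hsep h2
  have hsub : X₁ ⊆ Kstar := hK4 X₁ hX₁sem hX₁contr hX₁V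
  calc orthS Kstar ⊆ orthS X₁ := orthS_antitone hsub
    _ ⊆ W := orthS_orthC_subset hWcong hWclosed

end MaxPlus
end
end Helpers8

open MaxPlus

/-- Let `V` be a congruence and `K := V^⊤`.  If `K*` is the
maximal `(Aᵗ,Cᵗ)`-controlled invariant semimodule contained in `K`, then
`(K*)^⊥` is the minimal closed `(C,A)`-conditioned invariant congruence
containing `V`: it is closed, `(C,A)`-conditioned invariant, contains `V`,
and is contained in every closed `(C,A)`-conditioned invariant congruence
containing `V`.  Consequently the minimal `(C,A)`-conditioned invariant
congruence `V* = V*(C,A)` containing `V` (the intersection of all such)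
satisfies `V* ⊆ (K*)^⊥`, with equality whenever `V*` is closed. -/
theorem minimal_closed_conditioned_invariant
    {n q : ℕ} (A : Matrix (Fin n) (Fin n) Rmax) (C : Matrix (Fin q) (Fin n) Rmax)
    (V : Set (Vec Rmax n × Vec Rmax n)) (hV : IsCongruence V)
    (Kstar : Set (Vec Rmax n))
    (hK1 : IsSemimodule Kstar)
    (hK2 : ContrInv A.transpose C.transpose Kstar)
    (hK3 : Kstar ⊆ orthC V)
    (hK4 : ∀ X : Set (Vec Rmax n), IsSemimodule X →
      ContrInv A.transpose C.transpose X → X ⊆ orthC V → X ⊆ Kstar)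
    (Vstar : Set (Vec Rmax n × Vec Rmax n))
    (hVstar : Vstar = ⋂₀ {W | IsCongruence W ∧ CondInv C A W ∧ V ⊆ W}) :
    IsClosed (orthS Kstar) ∧ IsCongruence (orthS Kstar) ∧
      CondInv C A (orthS Kstar) ∧ V ⊆ orthS Kstar ∧
      (∀ W : Set (Vec Rmax n × Vec Rmax n), IsCongruence W → IsClosed W →
        CondInv C A W → V ⊆ W → orthS Kstar ⊆ W) ∧
      Vstar ⊆ orthS Kstar ∧
      (IsClosed Vstar → Vstar = orthS Kstar) := by
  have part1 : IsClosed (orthS Kstar) := isClosed_orthS Kstar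
  have part2 : IsCongruence (orthS Kstar) := orthS_congruence Kstar
  have part3 : CondInv C A (orthS Kstar) := by
    rintro p ⟨⟨x, y⟩, ⟨hwO, hwK⟩, rfl⟩
    intro z hz
    show dotMP (mulVecMP A x) z = dotMP (mulVecMP A y) z
    rw [dot_mulVec, dot_mulVec]
    obtain ⟨w', hw', y', ⟨u, rfl⟩, heq⟩ := hK2 ⟨z, hz, rfl⟩
    rw [heq, dot_sup_right, dot_sup_right]
    have h1 : dotMP x w' = dotMP y w' := hwO w' hw'
    have h2 : dotMP x (mulVecMP C.transpose u) = dotMP y (mulVecMP C.transpose u) := by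
      rw [← dot_mulVec, ← dot_mulVec]
      have hk : mulVecMP C x = mulVecMP C y := hwK
      rw [hk]
    rw [h1, h2]
  have part4 : V ⊆ orthS Kstar := by
    rintro ⟨x, y⟩ hxy z hz
    exact hK3 hz (x, y) hxy
  have part5 : ∀ W : Set (Vec Rmax n × Vec Rmax n), IsCongruence W → IsClosed W →
      CondInv C A W → V ⊆ W → orthS Kstar ⊆ W :=
    fun W h1 h2 h3 h4 => main_minimality A C V Kstar hK4 W h1 h2 h3 h4
  have part6 : Vstar ⊆ orthS Kstar := by
    rw [hVstar]
    exact Set.sInter_subset_of_mem ⟨part2, part3, part4⟩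
  have hVsCong : IsCongruence Vstar := by
    subst hVstar
    refine ⟨⟨fun x W hW => hW.1.1.refl x,
      fun h W hW => hW.1.1.symm (h W hW),
      fun h1 h2 W hW => hW.1.1.trans (h1 W hW) (h2 W hW)⟩, ?_⟩
    intro p hp p' hp' lam mu W hW
    exact hW.1.2 p (hp W hW) p' (hp' W hW) lam mu
  have hVsCond : CondInv C A Vstar := by
    subst hVstar
    rintro p ⟨w, ⟨hw1, hw2⟩, rfl⟩
    intro W hW
    exact hW.2.1 ⟨w, ⟨hw1 W hW, hw2⟩, rfl⟩
  have hVVs : V ⊆ Vstar := by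
    subst hVstar
    intro p hp W hW
    exact hW.2.2 hp
  exact ⟨part1, part2, part3, part4, part5, part6, fun hcl =>
    Set.Subset.antisymm part6 (part5 Vstar hVsCong hcl hVsCond hVVs)⟩
end
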